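/- arXiv:0911.4580 — 7 statements merged into one kernel-verified Lean document; each statement's English description precedes it below -/
import Mathlib

section
/- For any n-dimensional parallelepiped P in Euclidean space, no translate of the interior of P can contain two distinct vertices of P; consequently, the minimal number c(P) of translates of int(P) needed to cover P is at least 2^n. -/
open Pointwise

theorem stmt_0 (n : ℕ) (c : EuclideanSpace ℝ (Fin n)) (v : Fin n → EuclideanSpace ℝ (Fin n))
    (hv : LinearIndependent ℝ v)
    (P : Set (EuclideanSpace ℝ (Fin n)))
    (hP : P = {x | ∃ l : Fin n → ℝ, (∀ i, l i ∈ Set.Icc (0:ℝ) 1) ∧ x = c + ∑ i, l i • v i}) :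
    (∀ t : EuclideanSpace ℝ (Fin n), ∀ ε ε' : Fin n → ℝ,
      (∀ i, ε i = 0 ∨ ε i = 1) → (∀ i, ε' i = 0 ∨ ε' i = 1) → ε ≠ ε' →
      ¬ ((c + ∑ i, ε i • v i ∈ t +ᵥ interior P) ∧ (c + ∑ i, ε' i • v i ∈ t +ᵥ interior P))) ∧
    (∀ T : Finset (EuclideanSpace ℝ (Fin n)),
      P ⊆ ⋃ t ∈ T, (t +ᵥ interior P) → 2 ^ n ≤ T.card) := by
  classical
  have huniq : ∀ l l' : Fin n → ℝ, ∑ i, l i • v i = ∑ i, l' i • v i → l = l' := by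
    intro l l' h
    funext i
    have h0 : ∑ i, (l i - l' i) • v i = 0 := by
      simp [sub_smul, Finset.sum_sub_distrib, h]
    have := Fintype.linearIndependent_iff.mp hv (fun i => l i - l' i) h0 i
    linarith
  -- interior points have coordinates strictly in (0,1)
  have hint : ∀ x ∈ interior P,
      ∃ l : Fin n → ℝ, (∀ i, l i ∈ Set.Ioo (0:ℝ) 1) ∧ x = c + ∑ i, l i • v i := by
    intro x hx
    obtain ⟨δ, hδ, hball⟩ := Metric.isOpen_iff.mp isOpen_interior x hx
    have hxP := interior_subset hx
    rw [hP] at hxP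
    obtain ⟨l, hl, hxe⟩ := hxP
    refine ⟨l, fun i => ?_, hxe⟩
    have hvi : v i ≠ 0 := hv.ne_zero i
    have hni : (0:ℝ) < ‖v i‖ := norm_pos_iff.mpr hvi
    set η : ℝ := δ / (2 * ‖v i‖) with hηdef
    have hηpos : 0 < η := by positivity
    have hmem : ∀ s : ℝ, |s| = η → x + s • v i ∈ P := by
      intro s hs
      have hd : dist (x + s • v i) x < δ := by
        rw [dist_eq_norm]
        have : x + s • v i - x = s • v i := by abel
        rw [this, norm_smul, Real.norm_eq_abs, hs]
        rw [hηdef]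
        rw [div_mul_eq_mul_div]
        rw [div_lt_iff₀ (by positivity)]
        nlinarith
      exact interior_subset (hball (Metric.mem_ball.mpr hd))
    have key : ∀ s : ℝ, |s| = η → 0 ≤ l i + s ∧ l i + s ≤ 1 := by
      intro s hs
      have h1 := hmem s hs
      rw [hP] at h1
      obtain ⟨l', hl', he⟩ := h1
      have heq : ∑ j, l' j • v j = ∑ j, (l j + if j = i then s else 0) • v j := by
        have hsplit : ∑ j, (l j + if j = i then s else 0) • v j
            = (∑ j, l j • v j) + s • v i := by
          simp [add_smul, Finset.sum_add_distrib, Finset.sum_ite_eq']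
        rw [hsplit]
        have h2 : c + ∑ j, l' j • v j = c + (∑ j, l j • v j) + s • v i := by
          rw [← he, hxe]; try abel
        calc ∑ j, l' j • v j = -c + (c + ∑ j, l' j • v j) := by abel
          _ = -c + (c + (∑ j, l j • v j) + s • v i) := by rw [h2]
          _ = (∑ j, l j • v j) + s • v i := by abel
      have hfun := huniq _ _ heq
      have : l' i = l i + s := by
        have := congrFun hfun i
        simpa using this
      have hb := hl' i
      rw [this] at hb
      exact ⟨hb.1, hb.2⟩
    have hpos := key (-η) (by rw [abs_neg, abs_of_pos hηpos])
    have hle := key η (abs_of_pos hηpos)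
    constructor
    · linarith [hpos.1]
    · linarith [hle.2]
  have part1 : ∀ t : EuclideanSpace ℝ (Fin n), ∀ ε ε' : Fin n → ℝ,
      (∀ i, ε i = 0 ∨ ε i = 1) → (∀ i, ε' i = 0 ∨ ε' i = 1) → ε ≠ ε' →
      ¬ ((c + ∑ i, ε i • v i ∈ t +ᵥ interior P) ∧ (c + ∑ i, ε' i • v i ∈ t +ᵥ interior P)) := by
    intro t ε ε' hε hε' hne ⟨h1, h2⟩
    rw [Set.mem_vadd_set_iff_neg_vadd_mem] at h1 h2
    obtain ⟨l, hl, he1⟩ := hint _ h1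
    obtain ⟨l', hl', he2⟩ := hint _ h2
    have e1 : ∑ i, (ε i - l i) • v i = ∑ i, (ε' i - l' i) • v i := by
      have k1 : -t + (c + ∑ i, ε i • v i) = c + ∑ i, l i • v i := he1
      have k2 : -t + (c + ∑ i, ε' i • v i) = c + ∑ i, l' i • v i := he2
      have : (∑ i, ε i • v i) - ∑ i, l i • v i = (∑ i, ε' i • v i) - ∑ i, l' i • v i := by
        have d1 : (∑ i, ε i • v i) - ∑ i, l i • v i = t := by
          calc (∑ i, ε i • v i) - ∑ i, l i • v i
              = (c + ∑ i, ε i • v i) - (c + ∑ i, l i • v i) := by abel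
            _ = (c + ∑ i, ε i • v i) - (-t + (c + ∑ i, ε i • v i)) := by rw [k1]
            _ = t := by abel
        have d2 : (∑ i, ε' i • v i) - ∑ i, l' i • v i = t := by
          calc (∑ i, ε' i • v i) - ∑ i, l' i • v i
              = (c + ∑ i, ε' i • v i) - (c + ∑ i, l' i • v i) := by abel
            _ = (c + ∑ i, ε' i • v i) - (-t + (c + ∑ i, ε' i • v i)) := by rw [k2]
            _ = t := by abel
        rw [d1, d2]
      simpa [sub_smul, Finset.sum_sub_distrib] using this
    have hfun := huniq _ _ e1
    apply hne
    funext i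
    have hi := congrFun hfun i
    have hli := hl i
    have hl'i := hl' i
    rcases hε i with h | h <;> rcases hε' i with h' | h' <;>
      simp only [h, h'] at hi ⊢ <;>
      first
        | rfl
        | (exfalso; simp only [Set.mem_Ioo] at hli hl'i; linarith)
  refine ⟨part1, ?_⟩
  intro T hT
  have hvert : ∀ ε : Fin n → Fin 2, (c + ∑ i, ((ε i : ℕ) : ℝ) • v i) ∈ P := by
    intro ε
    rw [hP]
    refine ⟨fun i => ((ε i : ℕ) : ℝ), fun i => ?_, rfl⟩
    have : (ε i : ℕ) = 0 ∨ (ε i : ℕ) = 1 := by omega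
    rcases this with h | h <;> simp [h]
  have hcov : ∀ ε : Fin n → Fin 2, ∃ t ∈ T,
      (c + ∑ i, ((ε i : ℕ) : ℝ) • v i) ∈ t +ᵥ interior P := by
    intro ε
    have := hT (hvert ε)
    simpa using this
  choose f hfT hfmem using hcov
  have hinj : Set.InjOn f ↑(Finset.univ : Finset (Fin n → Fin 2)) := by
    intro a _ b _ hab
    by_contra hne
    apply part1 (f a) (fun i => ((a i : ℕ) : ℝ)) (fun i => ((b i : ℕ) : ℝ))
      (fun i => by have : (a i : ℕ) = 0 ∨ (a i : ℕ) = 1 := by omega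
                   rcases this with h | h <;> simp [h])
      (fun i => by have : (b i : ℕ) = 0 ∨ (b i : ℕ) = 1 := by omega
                   rcases this with h | h <;> simp [h])
      ?_ ⟨hfmem a, hab ▸ hfmem b⟩
    intro heq
    apply hne
    funext i
    have := congrFun heq i
    have : (a i : ℕ) = (b i : ℕ) := Nat.cast_injective this
    exact Fin.val_injective this
  calc (2:ℕ) ^ n = (Finset.univ : Finset (Fin n → Fin 2)).card := by simp
    _ ≤ T.card := Finset.card_le_card_of_injOn f (fun ε _ => hfT ε) hinj
end

section
/- For every n-dimensional convex body K and all positive integers m with m ≤ n, the smallest r > 0 such that K can be covered by m translates of rK equals 1; that is, γ_m(K) = 1 for m ≤ n. -/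
open Pointwise

/-- `gamma m K` is the infimum of all `r > 0` such that `K` can be covered by
`m` translates of `r • K`. -/
noncomputable def gamma {E : Type*} [NormedAddCommGroup E] [NormedSpace ℝ E]
    (m : ℕ) (K : Set E) : ℝ :=
  sInf {r : ℝ | 0 < r ∧ ∃ x : Fin m → E, K ⊆ ⋃ i, (x i +ᵥ r • K)}

open scoped RealInnerProductSpace

/-- Given `m ≤ n` vectors in `ℝⁿ` (with `0 < m ≤ n`), there is a nonzero vector making
nonpositive inner product with all of them. -/
lemma exists_nonpos_inner {n m : ℕ} (hm : 0 < m) (hmn : m ≤ n)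
    (w : Fin m → EuclideanSpace ℝ (Fin n)) :
    ∃ u : EuclideanSpace ℝ (Fin n), u ≠ 0 ∧ ∀ i, ⟪w i, u⟫ ≤ 0 := by
  set L : EuclideanSpace ℝ (Fin n) →ₗ[ℝ] (Fin m → ℝ) :=
    LinearMap.pi fun i => ((innerSL ℝ (w i)).toLinearMap) with hL
  by_cases hinj : Function.Injective L
  · -- then n ≤ m, so m = n and L is surjective
    have h1 : Module.finrank ℝ (LinearMap.range L) = n := by
      rw [LinearMap.finrank_range_of_inj hinj, finrank_euclideanSpace_fin]
    have h2 : Module.finrank ℝ (Fin m → ℝ) = m := Module.finrank_fin_fun ℝ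
    have hnm : n ≤ m := by
      have := Submodule.finrank_le (LinearMap.range L)
      omega
    have hrange : LinearMap.range L = ⊤ := by
      apply Submodule.eq_top_of_finrank_eq
      rw [h1, h2]; omega
    obtain ⟨u, hu⟩ := LinearMap.range_eq_top.mp hrange (fun _ => (-1 : ℝ))
    refine ⟨u, ?_, ?_⟩
    · intro h0
      have : L u = 0 := by rw [h0, map_zero]
      rw [hu] at this
      have := congrFun this ⟨0, hm⟩
      norm_num at this
    · intro i
      have : L u i = -1 := by rw [hu]
      simp only [hL, LinearMap.pi_apply, ContinuousLinearMap.coe_coe, innerSL_apply_apply] at this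
      rw [this]; norm_num
  · -- kernel is nontrivial
    have : LinearMap.ker L ≠ ⊥ := by
      rwa [Ne, LinearMap.ker_eq_bot]
    obtain ⟨u, hu, hu0⟩ := Submodule.exists_mem_ne_zero_of_ne_bot this
    refine ⟨u, hu0, fun i => ?_⟩
    have : L u = 0 := hu
    have := congrFun this i
    simp only [hL, LinearMap.pi_apply, ContinuousLinearMap.coe_coe, innerSL_apply_apply,
      Pi.zero_apply] at this
    rw [this]

/-- `K` cannot be covered by `m ≤ n` translates of `r • K` for `r < 1`. -/
lemma no_cover {n m : ℕ} (hm : 0 < m) (hmn : m ≤ n)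
    (K : Set (EuclideanSpace ℝ (Fin n)))
    (hKc : IsCompact K) (hKint : (interior K).Nonempty)
    {r : ℝ} (hr0 : 0 < r) (hr1 : r < 1) (x : Fin m → EuclideanSpace ℝ (Fin n))
    (hcov : K ⊆ ⋃ i, (x i +ᵥ r • K)) : False := by
  obtain ⟨z, hz⟩ := hKint
  obtain ⟨ε, hε, hball⟩ := Metric.mem_nhds_iff.mp (mem_interior_iff_mem_nhds.mp hz)
  have hballK : Metric.ball z ε ⊆ K := hball
  -- choose u
  obtain ⟨u, hu0, hu⟩ := exists_nonpos_inner hm hmn (fun i => x i - (1 - r) • z)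
  -- max of ⟪u, ·⟫ on K
  have hKne : K.Nonempty := ⟨z, interior_subset hz⟩
  obtain ⟨y₀, hy₀K, hy₀max⟩ := hKc.exists_isMaxOn hKne
    ((innerSL ℝ u).continuous.continuousOn)
  -- h > ⟪u, z⟫
  have hpt : z + (ε / 2) • (‖u‖⁻¹ • u) ∈ K := by
    apply hballK
    rw [Metric.mem_ball, dist_eq_norm]
    have : ‖z + (ε / 2) • (‖u‖⁻¹ • u) - z‖ = ε / 2 := by
      rw [add_sub_cancel_left, norm_smul, norm_smul, norm_inv, norm_norm]
      rw [Real.norm_eq_abs, abs_of_pos (by linarith)]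
      field_simp [norm_ne_zero_iff.mpr hu0]
    rw [this]; linarith
  have hgt : ⟪u, z⟫ < ⟪u, y₀⟫ := by
    have h1 : ⟪u, z + (ε / 2) • (‖u‖⁻¹ • u)⟫ ≤ ⟪u, y₀⟫ := hy₀max hpt
    have h2 : ⟪u, z + (ε / 2) • (‖u‖⁻¹ • u)⟫ = ⟪u, z⟫ + (ε / 2) * ‖u‖⁻¹ * (‖u‖ * ‖u‖) := by
      rw [inner_add_right, real_inner_smul_right, real_inner_smul_right,
        real_inner_self_eq_norm_mul_norm]
      ring
    have hupos : 0 < ‖u‖ := norm_pos_iff.mpr hu0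
    have : 0 < (ε / 2) * ‖u‖⁻¹ * (‖u‖ * ‖u‖) := by positivity
    linarith
  -- y₀ is covered
  obtain ⟨i, hi⟩ := Set.mem_iUnion.mp (hcov hy₀K)
  obtain ⟨c, hc, hci⟩ := Set.mem_vadd_set.mp hi
  obtain ⟨c', hc', rfl⟩ := hc
  -- hci : x i +ᵥ r • c' = y₀
  have hy₀eq : y₀ = x i + r • c' := by rw [← hci]; rfl
  have hcle : ⟪u, c'⟫ ≤ ⟪u, y₀⟫ := hy₀max hc'
  have hxi : ⟪u, x i⟫ ≤ (1 - r) * ⟪u, z⟫ := by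
    have h := hu i
    rw [inner_sub_left, real_inner_smul_left] at h
    rw [← real_inner_comm (x i) u, ← real_inner_comm z u] at h
    linarith
  have heq : ⟪u, y₀⟫ = ⟪u, x i⟫ + r * ⟪u, c'⟫ := by
    rw [hy₀eq, inner_add_right, real_inner_smul_right]
  have hrc := mul_le_mul_of_nonneg_left hcle hr0.le
  nlinarith [hgt]

theorem stmt_1 (n m : ℕ) (hm : 0 < m) (hmn : m ≤ n)
    (K : Set (EuclideanSpace ℝ (Fin n)))
    (hKc : IsCompact K) (hKconv : Convex ℝ K) (hKint : (interior K).Nonempty) :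
    gamma m K = 1 := by
  have h1mem : (1 : ℝ) ∈ {r : ℝ | 0 < r ∧
      ∃ x : Fin m → EuclideanSpace ℝ (Fin n), K ⊆ ⋃ i, (x i +ᵥ r • K)} := by
    refine ⟨one_pos, fun _ => 0, fun y hy => ?_⟩
    apply Set.mem_iUnion.mpr ⟨⟨0, hm⟩, ?_⟩
    rw [zero_vadd, one_smul]
    exact hy
  have hlb : ∀ b ∈ {r : ℝ | 0 < r ∧
      ∃ x : Fin m → EuclideanSpace ℝ (Fin n), K ⊆ ⋃ i, (x i +ᵥ r • K)}, (1 : ℝ) ≤ b := by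
    rintro b ⟨hb0, x, hcov⟩
    by_contra hb1
    push_neg at hb1
    exact no_cover hm hmn K hKc hKint hb0 hb1 x hcov
  unfold gamma
  exact le_antisymm (csInf_le ⟨1, hlb⟩ h1mem) (le_csInf ⟨1, h1mem⟩ hlb)
end

section
/- For the three-dimensional ℓ_p unit ball K_p = {(x,y,z) : |x|^p + |y|^p + |z|^p ≤ 1} with 1 ≤ p ≤ 2, K_p is covered by the six translates √(2/3)·K_p ± ((1/3)^{1/p},0,0), √(2/3)·K_p ± (0,(1/3)^{1/p},0), √(2/3)·K_p ± (0,0,(1/3)^{1/p}). Hence γ₆(K_p) ≤ √(2/3). -/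
open Pointwise

lemma rpow_superadd {p u v : ℝ} (hp : 1 ≤ p) (hu : 0 ≤ u) (hv : 0 ≤ v) :
    u ^ p + v ^ p ≤ (u + v) ^ p := by
  lift u to NNReal using hu
  lift v to NNReal using hv
  exact_mod_cast NNReal.add_rpow_le_rpow_add u v hp

lemma key_ineq (p : ℝ) (hp1 : 1 ≤ p) (hp2 : p ≤ 2) (x Y Z : ℝ)
    (hY : 0 ≤ Y) (hZ : 0 ≤ Z)
    (hsum : |x| ^ p + Y + Z ≤ 1) (h1 : Y ≤ |x| ^ p) (h2 : Z ≤ |x| ^ p) :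
    (abs (|x| - ((1:ℝ)/3) ^ (1/p))) ^ p + Y + Z ≤ ((2:ℝ)/3) ^ (p/2) := by
  have hp0 : (0:ℝ) < p := lt_of_lt_of_le one_pos hp1
  set a : ℝ := ((1:ℝ)/3) ^ (1/p) with ha
  have ha0 : 0 ≤ a := Real.rpow_nonneg (by norm_num) _
  have hap : a ^ p = 1/3 := by
    rw [ha, ← Real.rpow_mul (by norm_num : (0:ℝ) ≤ 1/3), one_div_mul_cancel hp0.ne',
      Real.rpow_one]
  have h23 : (2/3 : ℝ) ≤ ((2:ℝ)/3) ^ (p/2) := by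
    nth_rewrite 1 [show (2/3 : ℝ) = ((2:ℝ)/3) ^ (1:ℝ) from (Real.rpow_one _).symm]
    exact Real.rpow_le_rpow_of_exponent_ge (by norm_num) (by norm_num) (by linarith)
  rcases le_total a |x| with hax | hax
  · have hkey : (abs (|x| - a)) ^ p ≤ |x| ^ p - 1/3 := by
      rw [abs_of_nonneg (by linarith)]
      have h := rpow_superadd hp1 (sub_nonneg.2 hax) ha0
      have he : |x| - a + a = |x| := by ring
      rw [he, hap] at h
      linarith
    linarith
  · have hxp : |x| ^ p ≤ 1/3 := by
      calc |x| ^ p ≤ a ^ p := Real.rpow_le_rpow (abs_nonneg x) hax hp0.le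
        _ = 1/3 := hap
    have hkey : (abs (|x| - a)) ^ p ≤ 1/3 - |x| ^ p := by
      rw [abs_sub_comm, abs_of_nonneg (by linarith)]
      have h := rpow_superadd hp1 (sub_nonneg.2 hax) (abs_nonneg x)
      have he : a - |x| + |x| = a := by ring
      rw [he, hap] at h
      linarith
    linarith

lemma mem_translate (p s : ℝ) (hs : 0 < s)
    (Kp : Set (ℝ × ℝ × ℝ))
    (hKp : Kp = {w : ℝ × ℝ × ℝ | |w.1| ^ p + |w.2.1| ^ p + |w.2.2| ^ p ≤ 1})
    (c w : ℝ × ℝ × ℝ)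
    (h : |w.1 - c.1| ^ p + |w.2.1 - c.2.1| ^ p + |w.2.2 - c.2.2| ^ p ≤ s ^ p) :
    w ∈ c +ᵥ s • Kp := by
  have hsp : (0:ℝ) < s ^ p := Real.rpow_pos_of_pos hs p
  rw [Set.mem_vadd_set_iff_neg_vadd_mem, Set.mem_smul_set_iff_inv_smul_mem₀ hs.ne', hKp]
  simp only [vadd_eq_add, Prod.smul_fst, Prod.smul_snd, Prod.fst_add, Prod.snd_add,
    Prod.fst_neg, Prod.snd_neg, smul_eq_mul, Set.mem_setOf_eq]
  have habs : ∀ t : ℝ, |s⁻¹ * t| = |t| / s := fun t => by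
    rw [abs_mul, abs_inv, abs_of_pos hs, inv_mul_eq_div]
  rw [habs, habs, habs, Real.div_rpow (abs_nonneg _) hs.le,
    Real.div_rpow (abs_nonneg _) hs.le, Real.div_rpow (abs_nonneg _) hs.le,
    ← add_div, ← add_div, div_le_one hsp]
  simpa [neg_add_eq_sub] using h

theorem stmt_11 (p : ℝ) (hp1 : 1 ≤ p) (hp2 : p ≤ 2)
    (Kp : Set (ℝ × ℝ × ℝ))
    (hKp : Kp = {w : ℝ × ℝ × ℝ | |w.1| ^ p + |w.2.1| ^ p + |w.2.2| ^ p ≤ 1})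
    (a s : ℝ) (ha : a = ((1:ℝ)/3) ^ (1/p)) (hs : s = Real.sqrt (2/3)) :
    Kp ⊆ ((( a, 0, 0) : ℝ × ℝ × ℝ) +ᵥ s • Kp) ∪ (((-a, 0, 0) : ℝ × ℝ × ℝ) +ᵥ s • Kp) ∪
        (((0, a, 0) : ℝ × ℝ × ℝ) +ᵥ s • Kp) ∪ (((0, -a, 0) : ℝ × ℝ × ℝ) +ᵥ s • Kp) ∪
        (((0, 0, a) : ℝ × ℝ × ℝ) +ᵥ s • Kp) ∪ (((0, 0, -a) : ℝ × ℝ × ℝ) +ᵥ s • Kp) ∧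
      gamma 6 Kp ≤ Real.sqrt (2/3) := by
  have hp0 : (0:ℝ) < p := lt_of_lt_of_le one_pos hp1
  have hs0 : 0 < s := by rw [hs]; exact Real.sqrt_pos.2 (by norm_num)
  have hsp : s ^ p = ((2:ℝ)/3) ^ (p/2) := by
    rw [hs, Real.sqrt_eq_rpow, ← Real.rpow_mul (by norm_num : (0:ℝ) ≤ 2/3)]
    ring_nf
  have cover : Kp ⊆ ((( a, 0, 0) : ℝ × ℝ × ℝ) +ᵥ s • Kp) ∪
      (((-a, 0, 0) : ℝ × ℝ × ℝ) +ᵥ s • Kp) ∪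
      (((0, a, 0) : ℝ × ℝ × ℝ) +ᵥ s • Kp) ∪ (((0, -a, 0) : ℝ × ℝ × ℝ) +ᵥ s • Kp) ∪
      (((0, 0, a) : ℝ × ℝ × ℝ) +ᵥ s • Kp) ∪ (((0, 0, -a) : ℝ × ℝ × ℝ) +ᵥ s • Kp) := by
    intro w hw
    have hw' : |w.1| ^ p + |w.2.1| ^ p + |w.2.2| ^ p ≤ 1 := by rw [hKp] at hw; exact hw
    have hX : (0:ℝ) ≤ |w.1| ^ p := Real.rpow_nonneg (abs_nonneg _) _
    have hY : (0:ℝ) ≤ |w.2.1| ^ p := Real.rpow_nonneg (abs_nonneg _) _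
    have hZ : (0:ℝ) ≤ |w.2.2| ^ p := Real.rpow_nonneg (abs_nonneg _) _
    rcases le_total (|w.2.1| ^ p) (|w.1| ^ p) with h1 | h1
    · rcases le_total (|w.2.2| ^ p) (|w.1| ^ p) with h2 | h2
      · -- first coordinate max
        have key := key_ineq p hp1 hp2 w.1 (|w.2.1| ^ p) (|w.2.2| ^ p) hY hZ hw' h1 h2
        rw [← ha, ← hsp] at key
        rcases le_total 0 w.1 with hsgn | hsgn
        · left; left; left; left; left
          refine mem_translate p s hs0 Kp hKp (a, 0, 0) w ?_
          have e : |w.1 - a| = abs (|w.1| - a) := by rw [abs_of_nonneg hsgn]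
          show |w.1 - a| ^ p + |w.2.1 - 0| ^ p + |w.2.2 - 0| ^ p ≤ s ^ p
          rw [e, sub_zero, sub_zero]; exact key
        · left; left; left; left; right
          refine mem_translate p s hs0 Kp hKp (-a, 0, 0) w ?_
          have e : |w.1 - -a| = abs (|w.1| - a) := by
            rw [abs_of_nonpos hsgn, sub_neg_eq_add, show -w.1 - a = -(w.1 + a) by ring,
              abs_neg]
          show |w.1 - -a| ^ p + |w.2.1 - 0| ^ p + |w.2.2 - 0| ^ p ≤ s ^ p
          rw [e, sub_zero, sub_zero]; exact key
      · -- third coordinate max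
        have key := key_ineq p hp1 hp2 w.2.2 (|w.1| ^ p) (|w.2.1| ^ p) hX hY
          (by linarith) h2 (le_trans h1 h2)
        rw [← ha, ← hsp] at key
        rcases le_total 0 w.2.2 with hsgn | hsgn
        · left; right
          refine mem_translate p s hs0 Kp hKp (0, 0, a) w ?_
          have e : |w.2.2 - a| = abs (|w.2.2| - a) := by rw [abs_of_nonneg hsgn]
          show |w.1 - 0| ^ p + |w.2.1 - 0| ^ p + |w.2.2 - a| ^ p ≤ s ^ p
          rw [e, sub_zero, sub_zero]; linarith
        · right
          refine mem_translate p s hs0 Kp hKp (0, 0, -a) w ?_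
          have e : |w.2.2 - -a| = abs (|w.2.2| - a) := by
            rw [abs_of_nonpos hsgn, sub_neg_eq_add, show -w.2.2 - a = -(w.2.2 + a) by ring,
              abs_neg]
          show |w.1 - 0| ^ p + |w.2.1 - 0| ^ p + |w.2.2 - -a| ^ p ≤ s ^ p
          rw [e, sub_zero, sub_zero]; linarith
    · rcases le_total (|w.2.2| ^ p) (|w.2.1| ^ p) with h2 | h2
      · -- second coordinate max
        have key := key_ineq p hp1 hp2 w.2.1 (|w.1| ^ p) (|w.2.2| ^ p) hX hZ
          (by linarith) h1 h2
        rw [← ha, ← hsp] at key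
        rcases le_total 0 w.2.1 with hsgn | hsgn
        · left; left; left; right
          refine mem_translate p s hs0 Kp hKp (0, a, 0) w ?_
          have e : |w.2.1 - a| = abs (|w.2.1| - a) := by rw [abs_of_nonneg hsgn]
          show |w.1 - 0| ^ p + |w.2.1 - a| ^ p + |w.2.2 - 0| ^ p ≤ s ^ p
          rw [e, sub_zero, sub_zero]; linarith
        · left; left; right
          refine mem_translate p s hs0 Kp hKp (0, -a, 0) w ?_
          have e : |w.2.1 - -a| = abs (|w.2.1| - a) := by
            rw [abs_of_nonpos hsgn, sub_neg_eq_add, show -w.2.1 - a = -(w.2.1 + a) by ring,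
              abs_neg]
          show |w.1 - 0| ^ p + |w.2.1 - -a| ^ p + |w.2.2 - 0| ^ p ≤ s ^ p
          rw [e, sub_zero, sub_zero]; linarith
      · -- third coordinate max
        have key := key_ineq p hp1 hp2 w.2.2 (|w.1| ^ p) (|w.2.1| ^ p) hX hY
          (by linarith) (le_trans h1 h2) h2
        rw [← ha, ← hsp] at key
        rcases le_total 0 w.2.2 with hsgn | hsgn
        · left; right
          refine mem_translate p s hs0 Kp hKp (0, 0, a) w ?_
          have e : |w.2.2 - a| = abs (|w.2.2| - a) := by rw [abs_of_nonneg hsgn]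
          show |w.1 - 0| ^ p + |w.2.1 - 0| ^ p + |w.2.2 - a| ^ p ≤ s ^ p
          rw [e, sub_zero, sub_zero]; linarith
        · right
          refine mem_translate p s hs0 Kp hKp (0, 0, -a) w ?_
          have e : |w.2.2 - -a| = abs (|w.2.2| - a) := by
            rw [abs_of_nonpos hsgn, sub_neg_eq_add, show -w.2.2 - a = -(w.2.2 + a) by ring,
              abs_neg]
          show |w.1 - 0| ^ p + |w.2.1 - 0| ^ p + |w.2.2 - -a| ^ p ≤ s ^ p
          rw [e, sub_zero, sub_zero]; linarith
  refine ⟨cover, ?_⟩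
  have hmem : Real.sqrt (2/3) ∈
      {r : ℝ | 0 < r ∧ ∃ x : Fin 6 → ℝ × ℝ × ℝ, Kp ⊆ ⋃ i, (x i +ᵥ r • Kp)} := by
    refine ⟨hs ▸ hs0, ![(a,0,0), (-a,0,0), (0,a,0), (0,-a,0), (0,0,a), (0,0,-a)], ?_⟩
    rw [← hs]
    intro w hw
    rcases cover hw with ((((h | h) | h) | h) | h) | h
    · exact Set.mem_iUnion.2 ⟨0, h⟩
    · exact Set.mem_iUnion.2 ⟨1, h⟩
    · exact Set.mem_iUnion.2 ⟨2, h⟩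
    · exact Set.mem_iUnion.2 ⟨3, h⟩
    · exact Set.mem_iUnion.2 ⟨4, h⟩
    · exact Set.mem_iUnion.2 ⟨5, h⟩
  exact csInf_le ⟨0, fun r hr => hr.1.le⟩ hmem
end

section
/- For all real p with 2 ≤ p < ∞, one has (2/3)^p + 2·(1/3)^p ≤ (2/3)^{p/2}. -/
theorem stmt_13 (p : ℝ) (hp : 2 ≤ p) :
    ((2:ℝ)/3) ^ p + 2 * ((1:ℝ)/3) ^ p ≤ ((2:ℝ)/3) ^ (p/2) := by
  set u : ℝ := ((2:ℝ)/3) ^ (p/2) with hu_def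
  have hupos : 0 < u := Real.rpow_pos_of_pos (by norm_num) _
  have hsq : ((2:ℝ)/3) ^ p = u ^ 2 := by
    rw [hu_def, ← Real.rpow_natCast (((2:ℝ)/3) ^ (p/2)) 2,
      ← Real.rpow_mul (by norm_num)]
    norm_num
  have hule : u ≤ 2/3 := by
    have := Real.rpow_le_rpow_of_exponent_ge (x := (2:ℝ)/3) (by norm_num)
      (by norm_num) (show (1:ℝ) ≤ p/2 by linarith)
    simpa using this
  have h6 : (6:ℝ) ≤ 6 ^ (p/2) := by
    calc (6:ℝ) = 6 ^ (1:ℝ) := by norm_num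
    _ ≤ 6 ^ (p/2) := Real.rpow_le_rpow_of_exponent_le (by norm_num) (by linarith)
  have h13 : 2 * ((1:ℝ)/3) ^ p ≤ u / 3 := by
    have h3pos : (0:ℝ) < (3:ℝ) ^ p := Real.rpow_pos_of_pos (by norm_num) _
    have h3half : (0:ℝ) < (3:ℝ) ^ (p/2) := Real.rpow_pos_of_pos (by norm_num) _
    have hu_eq : u = 2 ^ (p/2) / 3 ^ (p/2) := by
      rw [hu_def, Real.div_rpow (by norm_num) (by norm_num)]
    have h13eq : ((1:ℝ)/3) ^ p = 1 / 3 ^ p := by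
      rw [Real.div_rpow (by norm_num) (by norm_num), Real.one_rpow]
    have hmul : (6:ℝ) ^ (p/2) = 2 ^ (p/2) * 3 ^ (p/2) := by
      rw [← Real.mul_rpow (by norm_num) (by norm_num)]; norm_num
    have hsplit : (3:ℝ) ^ p = 3 ^ (p/2) * 3 ^ (p/2) := by
      rw [← Real.rpow_add (by norm_num)]; ring_nf
    rw [h13eq, hu_eq, mul_one_div, div_div, div_le_div_iff₀ h3pos (by positivity)]
    rw [hmul] at h6
    nlinarith [h3half, h6, hsplit]
  nlinarith [hsq, hule, h13, hupos]
end

section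
/- For all real p with 2 ≤ p < ∞, one has 3·((1/3)^{1/p} − 1/3)^p ≤ (2/3)^{p/2}; equivalently, the point ((1/3)^{1/p}, (1/3)^{1/p}, (1/3)^{1/p}) belongs to √(2/3)·K_p + (1/3,1/3,1/3). -/
open Pointwise

theorem stmt_14 (p : ℝ) (hp : 2 ≤ p)
    (Kp : Set (ℝ × ℝ × ℝ))
    (hKp : Kp = {w : ℝ × ℝ × ℝ | |w.1| ^ p + |w.2.1| ^ p + |w.2.2| ^ p ≤ 1})
    (a : ℝ) (ha : a = ((1:ℝ)/3) ^ (1/p)) :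
    3 * (a - 1/3) ^ p ≤ ((2:ℝ)/3) ^ (p/2) ∧
      ((a, a, a) : ℝ × ℝ × ℝ) ∈ Real.sqrt (2/3) • Kp + {((1/3, 1/3, 1/3) : ℝ × ℝ × ℝ)} := by
  have hp0 : (0:ℝ) < p := by linarith
  set s := Real.sqrt (2/3) with hs
  have hs0 : (0:ℝ) < s := Real.sqrt_pos.mpr (by norm_num)
  have hs23 : (2:ℝ)/3 ≤ s := by
    nlinarith [Real.sq_sqrt (show (0:ℝ) ≤ 2/3 by norm_num), Real.sqrt_nonneg ((2:ℝ)/3)]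
  have ha1 : a ≤ 1 := by
    rw [ha]
    exact Real.rpow_le_one (by norm_num) (by norm_num)
      (by positivity)
  have ha3 : 1/3 ≤ a := by
    rw [ha]
    calc (1:ℝ)/3 = ((1:ℝ)/3) ^ (1:ℝ) := by rw [Real.rpow_one]
    _ ≤ ((1:ℝ)/3) ^ (1/p) := by
        apply Real.rpow_le_rpow_of_exponent_ge (by norm_num) (by norm_num)
        rw [div_le_one hp0]; linarith
  have hkey : a - 1/3 ≤ s * a := by nlinarith
  have hap : a ^ p = 1/3 := by
    have h1 : (1/p) * p = 1 := by field_simp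
    rw [ha, ← Real.rpow_mul (by norm_num), h1, Real.rpow_one]
  have hsp : s ^ p = ((2:ℝ)/3) ^ (p/2) := by
    rw [hs, Real.sqrt_eq_rpow, ← Real.rpow_mul (by norm_num)]
    ring_nf
  have hmain : 3 * (a - 1/3) ^ p ≤ ((2:ℝ)/3) ^ (p/2) := by
    have h1 : (a - 1/3) ^ p ≤ (s * a) ^ p :=
      Real.rpow_le_rpow (by linarith) hkey hp0.le
    have h2 : (s * a) ^ p = s ^ p * a ^ p :=
      Real.mul_rpow hs0.le (by linarith)
    rw [h2, hap, hsp] at h1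
    linarith
  refine ⟨hmain, ?_⟩
  have h23 : (0:ℝ) < ((2:ℝ)/3) ^ (p/2) := Real.rpow_pos_of_pos (by norm_num) _
  set b := (a - 1/3) / s with hb
  have hb0 : 0 ≤ b := div_nonneg (by linarith) hs0.le
  refine Set.mem_add.mpr ⟨s • ((b, b, b) : ℝ × ℝ × ℝ), ?_, (1/3, 1/3, 1/3), rfl, ?_⟩
  · refine Set.smul_mem_smul_set ?_
    rw [hKp]
    simp only [Set.mem_setOf_eq, abs_of_nonneg hb0]
    have : b ^ p = (a - 1/3) ^ p / ((2:ℝ)/3) ^ (p/2) := by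
      rw [hb, Real.div_rpow (by linarith) hs0.le, hsp]
    rw [this, ← add_div, ← add_div, div_le_one h23]
    linarith
  · have : s * b = a - 1/3 := by
      rw [hb, mul_div_cancel₀ _ hs0.ne']
    simp only [Prod.smul_mk, smul_eq_mul, Prod.mk_add_mk, Prod.mk.injEq, this]
    norm_num
end

section
/- Every n-dimensional convex body K of constant width 1 satisfies 1 − √(n/(2n+2)) ≤ r(K) and R(K) ≤ √(n/(2n+2)), where r(K) and R(K) are the inradius and circumradius of K; in particular R(K)/r(K) ≤ (√(2n²+2n) + n)/(n+2). -/
/-- A convex body `K` has constant width `w` if for every unit direction `u` the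
distance between the two supporting hyperplanes orthogonal to `u` equals `w`. -/
def HasConstantWidth {n : ℕ} (K : Set (EuclideanSpace ℝ (Fin n))) (w : ℝ) : Prop :=
  ∀ u : EuclideanSpace ℝ (Fin n), ‖u‖ = 1 →
    sSup ((fun x => (inner ℝ u x : ℝ)) '' K) - sInf ((fun x => (inner ℝ u x : ℝ)) '' K) = w

/-- The inradius of `K`. -/
noncomputable def inradius {n : ℕ} (K : Set (EuclideanSpace ℝ (Fin n))) : ℝ :=
  sSup {r : ℝ | 0 ≤ r ∧ ∃ c, Metric.closedBall c r ⊆ K}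

/-- The circumradius of `K`. -/
noncomputable def circumradius {n : ℕ} (K : Set (EuclideanSpace ℝ (Fin n))) : ℝ :=
  sInf {R : ℝ | 0 ≤ R ∧ ∃ c, K ⊆ Metric.closedBall c R}

open Finset Metric

lemma width_diam {n : ℕ} {K : Set (EuclideanSpace ℝ (Fin n))} (hKc : IsCompact K)
    (hw : HasConstantWidth K 1) {x y : EuclideanSpace ℝ (Fin n)} (hx : x ∈ K) (hy : y ∈ K) :
    dist x y ≤ 1 := by
  rcases eq_or_ne x y with rfl | hne
  · simp
  · have hxy : (0:ℝ) < ‖x - y‖ := by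
      rw [norm_pos_iff, sub_ne_zero]; exact hne
    set u : EuclideanSpace ℝ (Fin n) := ‖x - y‖⁻¹ • (x - y) with hu
    have hun : ‖u‖ = 1 := by
      rw [hu, norm_smul, norm_inv, norm_norm, inv_mul_cancel₀ hxy.ne']
    have h := hw u hun
    have hcont : Continuous (fun z : EuclideanSpace ℝ (Fin n) => (inner ℝ u z : ℝ)) :=
      continuous_const.inner continuous_id
    have hbdd : BddAbove ((fun z => (inner ℝ u z : ℝ)) '' K) := (hKc.image hcont).bddAbove
    have hbdd' : BddBelow ((fun z => (inner ℝ u z : ℝ)) '' K) := (hKc.image hcont).bddBelow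
    have h1 : (inner ℝ u x : ℝ) ≤ sSup ((fun z => (inner ℝ u z : ℝ)) '' K) :=
      le_csSup hbdd ⟨x, hx, rfl⟩
    have h2 : sInf ((fun z => (inner ℝ u z : ℝ)) '' K) ≤ (inner ℝ u y : ℝ) :=
      csInf_le hbdd' ⟨y, hy, rfl⟩
    have key : (inner ℝ u x : ℝ) - inner ℝ u y = ‖x - y‖ := by
      rw [← inner_sub_right, hu, real_inner_smul_left, real_inner_self_eq_norm_mul_norm]
      field_simp
    rw [dist_eq_norm, ← key]
    linarith


set_option maxHeartbeats 1000000 in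
lemma jung_finset (n : ℕ) (P : Finset (EuclideanSpace ℝ (Fin n))) (hP : P.Nonempty)
    (hcard : P.card ≤ n + 1) (hdist : ∀ p ∈ P, ∀ q ∈ P, dist p q ≤ 1) :
    ∃ c, ∀ p ∈ P, dist p c ≤ Real.sqrt (n / (2 * n + 2)) := by
  classical
  set C : Set (EuclideanSpace ℝ (Fin n)) := convexHull ℝ (P : Set (EuclideanSpace ℝ (Fin n))) with hC
  have hCcomp : IsCompact C := P.finite_toSet.isCompact_convexHull ℝ
  have hCconv : Convex ℝ C := convex_convexHull ℝ _
  have hCne : C.Nonempty := ⟨hP.choose, subset_convexHull ℝ _ hP.choose_spec⟩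
  set f : EuclideanSpace ℝ (Fin n) → ℝ := fun c => P.sup' hP (fun p => dist p c) with hf
  have hfcont : Continuous f := by
    rw [continuous_iff_continuousAt]
    intro x
    exact ContinuousAt.finset_sup'_apply hP fun p _ =>
      (continuous_const.dist continuous_id).continuousAt
  obtain ⟨c, hcC, hmin⟩ := hCcomp.exists_isMinOn hCne hfcont.continuousOn
  set R : ℝ := f c with hR
  have hRp : ∀ p ∈ P, dist p c ≤ R := fun p hp => Finset.le_sup' (fun p => dist p c) hp
  set T : Finset (EuclideanSpace ℝ (Fin n)) := P.filter (fun p => dist p c = R) with hT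
  have hTsub : T ⊆ P := Finset.filter_subset _ _
  have hTne : T.Nonempty := by
    obtain ⟨p, hp, hpe⟩ := Finset.exists_mem_eq_sup' hP (fun p => dist p c)
    exact ⟨p, Finset.mem_filter.2 ⟨hp, hpe.symm⟩⟩
  have hTd : ∀ p ∈ T, dist p c = R := fun p hp => (Finset.mem_filter.1 hp).2
  have hR0 : 0 ≤ R := le_trans dist_nonneg (hRp _ (hTsub hTne.choose_spec))
  -- Step 1: c is in the convex hull of the contact points T
  have hchull : c ∈ convexHull ℝ (T : Set (EuclideanSpace ℝ (Fin n))) := by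
    by_contra hcT
    set H : Set (EuclideanSpace ℝ (Fin n)) := convexHull ℝ (T : Set (EuclideanSpace ℝ (Fin n)))
      with hH
    have hHcomp : IsCompact H := T.finite_toSet.isCompact_convexHull ℝ
    have hHconv : Convex ℝ H := convex_convexHull ℝ _
    have hHne : H.Nonempty := ⟨hTne.choose, subset_convexHull ℝ _ hTne.choose_spec⟩
    obtain ⟨q, hqH, hq⟩ := exists_norm_eq_iInf_of_complete_convex hHne
      (hHcomp.isClosed.isComplete) hHconv c
    have hproj : ∀ w ∈ H, (inner ℝ (c - q) (w - q) : ℝ) ≤ 0 :=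
      (norm_eq_iInf_iff_real_inner_le_zero hHconv hqH).1 hq
    have hqc : q ≠ c := fun h => hcT (h ▸ hqH)
    set d : ℝ := ‖q - c‖ with hd
    have hdpos : 0 < d := by rw [hd, norm_pos_iff, sub_ne_zero]; exact hqc
    have hinner : ∀ p ∈ T, d ^ 2 ≤ (inner ℝ (p - c) (q - c) : ℝ) := by
      intro p hp
      have hpH : p ∈ H := subset_convexHull ℝ _ (Finset.mem_coe.2 hp)
      have h1 : (inner ℝ (c - q) (p - q) : ℝ) ≤ 0 := hproj p hpH
      have h2 : (inner ℝ (p - c) (q - c) : ℝ)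
          = (inner ℝ (c - q) (p - q) : ℝ) * (-1) + ‖q - c‖ ^ 2 := by
        have h3 : p - c = (p - q) + (q - c) := by abel
        rw [h3, inner_add_left, real_inner_self_eq_norm_sq]
        have h4 : (inner ℝ (c - q) (p - q) : ℝ) = - (inner ℝ (p - q) (q - c) : ℝ) := by
          rw [show c - q = -(q - c) by abel, inner_neg_left, real_inner_comm]
        rw [h4]; ring
      rw [h2, ← hd]; nlinarith
    -- choose step size t
    set S : Finset ℝ := insert 1 ((P \ T).image (fun p => (R - dist p c) / (2 * d))) with hS
    have hSne : S.Nonempty := ⟨1, Finset.mem_insert_self _ _⟩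
    set t : ℝ := S.min' hSne with ht
    have hSpos : ∀ x ∈ S, 0 < x := by
      intro x hx
      rcases Finset.mem_insert.1 hx with rfl | hx
      · exact one_pos
      · obtain ⟨p, hp, rfl⟩ := Finset.mem_image.1 hx
        have hpP := (Finset.mem_sdiff.1 hp).1
        have hpT := (Finset.mem_sdiff.1 hp).2
        have hlt : dist p c < R :=
          lt_of_le_of_ne (hRp p hpP) fun h => hpT (Finset.mem_filter.2 ⟨hpP, h⟩)
        have : 0 < R - dist p c := by linarith
        positivity
    have htpos : 0 < t := hSpos t (S.min'_mem hSne)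
    have htle1 : t ≤ 1 := Finset.min'_le _ _ (Finset.mem_insert_self _ _)
    set c' : EuclideanSpace ℝ (Fin n) := c + t • (q - c) with hc'
    have hc'C : c' ∈ C := by
      have hqC : q ∈ C := by
        refine convexHull_mono ?_ hqH
        exact_mod_cast hTsub
      have := hCconv hcC hqC (by linarith : (0:ℝ) ≤ 1 - t) htpos.le (by ring)
      convert this using 1
      rw [hc']
      module
    have hdist' : ∀ p ∈ P, dist p c' < R := by
      intro p hp
      by_cases hpT : p ∈ T
      · have hsq : dist p c' ^ 2 < R ^ 2 := by
          have h1 : p - c' = (p - c) - t • (q - c) := by rw [hc']; abel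
          have h2 : dist p c' ^ 2
              = ‖p - c‖ ^ 2 - 2 * (t * (inner ℝ (p - c) (q - c) : ℝ)) + t ^ 2 * d ^ 2 := by
            rw [dist_eq_norm, h1, norm_sub_sq_real, real_inner_smul_right, norm_smul,
              Real.norm_eq_abs, abs_of_pos htpos, mul_pow, hd]
          have h3 : ‖p - c‖ = R := by rw [← dist_eq_norm]; exact hTd p hpT
          have h4 := hinner p hpT
          rw [h2, h3]
          nlinarith [mul_le_mul_of_nonneg_left h4 htpos.le, mul_pos htpos (mul_pos hdpos hdpos),
            mul_le_mul_of_nonneg_right htle1 (mul_nonneg htpos.le (mul_nonneg hdpos.le hdpos.le))]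
        exact lt_of_pow_lt_pow_left₀ 2 hR0 hsq
      · have hmemS : (R - dist p c) / (2 * d) ∈ S :=
          Finset.mem_insert_of_mem (Finset.mem_image_of_mem _ (Finset.mem_sdiff.2 ⟨hp, hpT⟩))
        have hlt : dist p c < R :=
          lt_of_le_of_ne (hRp p hp) fun h => hpT (Finset.mem_filter.2 ⟨hp, h⟩)
        have htle : t ≤ (R - dist p c) / (2 * d) := Finset.min'_le _ _ hmemS
        have hcc' : dist c c' = t * d := by
          have he : c - c' = (-t) • (q - c) := by rw [hc']; module
          rw [dist_eq_norm, he, norm_smul, Real.norm_eq_abs, abs_neg, abs_of_pos htpos, hd]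
        have h5 : dist p c' ≤ dist p c + dist c c' := dist_triangle p c c'
        have h6 : t * d ≤ (R - dist p c) / 2 := by
          rw [le_div_iff₀ (by positivity : (0:ℝ) < 2 * d)] at htle
          nlinarith
        rw [hcc'] at h5
        linarith
    have hfc' : f c' < R := by
      rw [hf]
      exact (Finset.sup'_lt_iff hP).2 fun p hp => hdist' p hp
    exact absurd (hmin hc'C) (by simpa using not_le.2 hfc')
  -- Step 2: weights
  rw [Finset.convexHull_eq] at hchull
  obtain ⟨w, hw0, hw1, hcm⟩ := hchull
  have hc' : ∑ y ∈ T, w y • y = c := by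
    rw [Finset.centerMass_eq_of_sum_1 _ id hw1] at hcm
    simpa using hcm
  have hS2 : ∑ y ∈ T, w y • (y - c) = 0 := by
    have : ∑ y ∈ T, w y • (y - c) = (∑ y ∈ T, w y • y) - (∑ y ∈ T, w y) • c := by
      rw [Finset.sum_smul]
      rw [← Finset.sum_sub_distrib]
      congr 1; ext y; rw [smul_sub]
    rw [this, hc', hw1, one_smul, sub_self]
  have hS1 : ∑ y ∈ T, w y * ‖y - c‖ ^ 2 = R ^ 2 := by
    have : ∀ y ∈ T, w y * ‖y - c‖ ^ 2 = w y * R ^ 2 := by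
      intro y hy
      rw [← dist_eq_norm, hTd y hy]
    rw [Finset.sum_congr rfl this, ← Finset.sum_mul, hw1, one_mul]
  have hinner_sum : ∀ p ∈ T, ∑ q ∈ T, w q * ‖p - q‖ ^ 2 = ‖p - c‖ ^ 2 + R ^ 2 := by
    intro p hp
    have hexp : ∀ q ∈ T, w q * ‖p - q‖ ^ 2
        = w q * ‖p - c‖ ^ 2 + w q * ‖q - c‖ ^ 2
          - 2 * (inner ℝ (p - c) (w q • (q - c)) : ℝ) := by
      intro q hq
      have h1 : p - q = (p - c) - (q - c) := by abel
      rw [h1, norm_sub_sq_real, real_inner_smul_right]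
      ring
    rw [Finset.sum_congr rfl hexp]
    rw [Finset.sum_sub_distrib, Finset.sum_add_distrib, ← Finset.sum_mul, hw1, one_mul, hS1,
      ← Finset.mul_sum, ← inner_sum, hS2, inner_zero_right]
    ring
  have hsigma : ∑ p ∈ T, w p * (∑ q ∈ T, w q * ‖p - q‖ ^ 2) = 2 * R ^ 2 := by
    have : ∀ p ∈ T, w p * (∑ q ∈ T, w q * ‖p - q‖ ^ 2) = w p * ‖p - c‖ ^ 2 + w p * R ^ 2 := by
      intro p hp; rw [hinner_sum p hp]; ring
    rw [Finset.sum_congr rfl this, Finset.sum_add_distrib, hS1, ← Finset.sum_mul, hw1]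
    ring
  -- the bound σ ≤ 1 - ∑ w²
  have hbound : ∑ p ∈ T, w p * (∑ q ∈ T, w q * ‖p - q‖ ^ 2) ≤ 1 - ∑ p ∈ T, w p ^ 2 := by
    have hin : ∀ p ∈ T, ∑ q ∈ T, w q * ‖p - q‖ ^ 2 ≤ 1 - w p := by
      intro p hp
      have step : ∑ q ∈ T, w q * ‖p - q‖ ^ 2
          ≤ ∑ q ∈ T, (w q - if q = p then w p else 0) := by
        apply Finset.sum_le_sum
        intro q hq
        by_cases h : q = p
        · subst h; simp
        · simp only [if_neg h]
          have hle1 : ‖p - q‖ ≤ 1 := by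
            rw [← dist_eq_norm]; exact hdist p (hTsub hp) q (hTsub hq)
          have h2 : ‖p - q‖ ^ 2 ≤ 1 := by nlinarith [norm_nonneg (p - q)]
          have := hw0 q hq
          nlinarith
      rw [Finset.sum_sub_distrib, hw1, Finset.sum_ite_eq' T p (fun _ => w p), if_pos hp] at step
      exact step
    calc ∑ p ∈ T, w p * (∑ q ∈ T, w q * ‖p - q‖ ^ 2)
        ≤ ∑ p ∈ T, w p * (1 - w p) := by
          apply Finset.sum_le_sum
          intro p hp
          exact mul_le_mul_of_nonneg_left (hin p hp) (hw0 p hp)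
      _ = 1 - ∑ p ∈ T, w p ^ 2 := by
          have he : ∀ p ∈ T, w p * (1 - w p) = w p - w p ^ 2 := fun p _ => by ring
          rw [Finset.sum_congr rfl he, Finset.sum_sub_distrib, hw1]
  -- Cauchy–Schwarz on weights
  have hcs : (1:ℝ) / (n + 1) ≤ ∑ p ∈ T, w p ^ 2 := by
    have h1 := sq_sum_le_card_mul_sum_sq (s := T) (f := w)
    rw [hw1, one_pow] at h1
    have hTcard : (T.card : ℝ) ≤ n + 1 := by
      have := Finset.card_le_card hTsub
      have := le_trans this hcard
      exact_mod_cast this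
    have hTpos : (0:ℝ) < T.card := by
      have := Finset.card_pos.2 hTne
      exact_mod_cast this
    have hsumsq : 0 ≤ ∑ p ∈ T, w p ^ 2 := Finset.sum_nonneg fun p _ => sq_nonneg _
    rw [div_le_iff₀ (by positivity : (0:ℝ) < (n:ℝ) + 1)]
    calc (1:ℝ) ≤ (T.card : ℝ) * ∑ p ∈ T, w p ^ 2 := h1
      _ ≤ ((n:ℝ) + 1) * ∑ p ∈ T, w p ^ 2 := by
          apply mul_le_mul_of_nonneg_right hTcard hsumsq
      _ = (∑ p ∈ T, w p ^ 2) * ((n:ℝ) + 1) := by ring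
  -- conclude
  have hfinal : R ≤ Real.sqrt (n / (2 * n + 2)) := by
    have h2R : 2 * R ^ 2 ≤ 1 - 1 / (n + 1) := by
      rw [← hsigma]
      calc ∑ p ∈ T, w p * (∑ q ∈ T, w q * ‖p - q‖ ^ 2) ≤ 1 - ∑ p ∈ T, w p ^ 2 := hbound
        _ ≤ 1 - 1 / (n + 1) := by linarith
    have hRsq : R ^ 2 ≤ (n : ℝ) / (2 * n + 2) := by
      have hn1 : (0:ℝ) < (n:ℝ) + 1 := by positivity
      have hmul := mul_le_mul_of_nonneg_right h2R hn1.le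
      have hone : (1 / ((n:ℝ) + 1)) * ((n:ℝ) + 1) = 1 := by field_simp
      rw [le_div_iff₀ (by positivity : (0:ℝ) < 2 * (n:ℝ) + 2)]
      nlinarith [hmul, hone]
    exact Real.le_sqrt_of_sq_le hRsq
  exact ⟨c, fun p hp => le_trans (hRp p hp) hfinal⟩

lemma jung (n : ℕ) {K : Set (EuclideanSpace ℝ (Fin n))} (hKc : IsCompact K)
    (hdiam : ∀ x ∈ K, ∀ y ∈ K, dist x y ≤ 1) :
    ∃ c, K ⊆ Metric.closedBall c (Real.sqrt (n / (2 * n + 2))) := by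
  classical
  have key : (⋂ x : K, Metric.closedBall (x : EuclideanSpace ℝ (Fin n))
      (Real.sqrt (n / (2 * n + 2)))).Nonempty := by
    apply Convex.helly_theorem_compact' (𝕜 := ℝ)
      (fun _ => convex_closedBall _ _) (fun _ => isCompact_closedBall _ _) ?_
    intro I hI
    rw [finrank_euclideanSpace_fin] at hI
    rcases I.eq_empty_or_nonempty with rfl | hIne
    · simp only [Finset.notMem_empty, Set.iInter_of_empty, Set.iInter_false, Set.iInter_univ]
      exact ⟨0, Set.mem_univ 0⟩
    · have hPne : (I.image (fun x : K => (x : EuclideanSpace ℝ (Fin n)))).Nonempty :=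
        hIne.image _
      have hpair : ∀ p ∈ I.image (fun x : K => (x : EuclideanSpace ℝ (Fin n))),
          ∀ q ∈ I.image (fun x : K => (x : EuclideanSpace ℝ (Fin n))), dist p q ≤ 1 := by
        intro p hp q hq
        obtain ⟨i, _, rfl⟩ := Finset.mem_image.1 hp
        obtain ⟨j, _, rfl⟩ := Finset.mem_image.1 hq
        exact hdiam _ i.2 _ j.2
      obtain ⟨c, hc⟩ := jung_finset n _ hPne (Finset.card_image_le.trans hI) hpair
      refine ⟨c, Set.mem_iInter₂.2 fun i hi => ?_⟩
      rw [Metric.mem_closedBall, dist_comm]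
      exact hc _ (Finset.mem_image_of_mem _ hi)
  obtain ⟨c, hc⟩ := key
  refine ⟨c, fun x hx => ?_⟩
  have h := Set.mem_iInter.1 hc ⟨x, hx⟩
  rw [Metric.mem_closedBall] at h ⊢
  rwa [dist_comm]


lemma inball (n : ℕ) {K : Set (EuclideanSpace ℝ (Fin n))} (hKc : IsCompact K)
    (hKconv : Convex ℝ K) (hKne : K.Nonempty) (hw : HasConstantWidth K 1)
    {c : EuclideanSpace ℝ (Fin n)} {s : ℝ} (hs0 : 0 ≤ s) (hs1 : s ≤ 1)
    (hball : K ⊆ Metric.closedBall c s) :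
    Metric.closedBall c (1 - s) ⊆ K := by
  intro x hx
  by_contra hxK
  obtain ⟨f, u, hfa, hfx⟩ := geometric_hahn_banach_closed_point hKconv hKc.isClosed hxK
  obtain ⟨v, hv⟩ : ∃ v : EuclideanSpace ℝ (Fin n), ∀ z, f z = (inner ℝ v z : ℝ) :=
    ⟨(InnerProductSpace.toDual ℝ _).symm f, fun z =>
      (InnerProductSpace.toDual_symm_apply (𝕜 := ℝ)).symm⟩
  obtain ⟨a, ha⟩ := hKne
  have hfne : f a < f x := lt_trans (hfa a ha) hfx
  have hvne : v ≠ 0 := by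
    intro h
    rw [hv, hv, h] at hfne
    simp at hfne
  have hvnorm : (0:ℝ) < ‖v‖ := norm_pos_iff.2 hvne
  set u0 : EuclideanSpace ℝ (Fin n) := ‖v‖⁻¹ • v with hu0
  have hu0n : ‖u0‖ = 1 := by
    rw [hu0, norm_smul, norm_inv, norm_norm, inv_mul_cancel₀ hvnorm.ne']
  have hwidth := hw u0 hu0n
  have hg : ∀ z, (inner ℝ u0 z : ℝ) = ‖v‖⁻¹ * f z := by
    intro z; rw [hu0, real_inner_smul_left, hv]
  have hcont : Continuous (fun z : EuclideanSpace ℝ (Fin n) => (inner ℝ u0 z : ℝ)) :=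
    continuous_const.inner continuous_id
  obtain ⟨y, hyK, hymin⟩ := hKc.exists_isMinOn ⟨a, ha⟩ hcont.continuousOn
  have hInf : sInf ((fun z => (inner ℝ u0 z : ℝ)) '' K) = (inner ℝ u0 y : ℝ) := by
    apply IsLeast.csInf_eq
    exact ⟨⟨y, hyK, rfl⟩, fun b ⟨z, hz, hbz⟩ => hbz ▸ hymin hz⟩
  set t : ℝ := ‖v‖⁻¹ * u with htt
  have hSup : sSup ((fun z => (inner ℝ u0 z : ℝ)) '' K) ≤ t := by
    refine csSup_le ⟨(inner ℝ u0 a : ℝ), ⟨a, ha, rfl⟩⟩ ?_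
    rintro b ⟨z, hz, rfl⟩
    show (inner ℝ u0 z : ℝ) ≤ t
    rw [hg]
    exact le_of_lt (by
      have := hfa z hz
      exact mul_lt_mul_of_pos_left this (by positivity))
  have hxt : t < (inner ℝ u0 x : ℝ) := by
    rw [hg x]
    exact mul_lt_mul_of_pos_left hfx (by positivity)
  -- geometric bounds
  have hyb : (inner ℝ u0 c : ℝ) - s ≤ inner ℝ u0 y := by
    have h1 : (inner ℝ u0 (c - y) : ℝ) ≤ ‖u0‖ * ‖c - y‖ := real_inner_le_norm _ _
    have h2 : ‖c - y‖ ≤ s := by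
      have := hball hyK
      rw [Metric.mem_closedBall, dist_eq_norm] at this
      rwa [norm_sub_rev]
    rw [inner_sub_right] at h1
    rw [hu0n, one_mul] at h1
    linarith
  have hxb : (inner ℝ u0 x : ℝ) ≤ inner ℝ u0 c + (1 - s) := by
    have h1 : (inner ℝ u0 (x - c) : ℝ) ≤ ‖u0‖ * ‖x - c‖ := real_inner_le_norm _ _
    have h2 : ‖x - c‖ ≤ 1 - s := by
      rw [Metric.mem_closedBall, dist_eq_norm] at hx
      exact hx
    rw [inner_sub_right, hu0n, one_mul] at h1
    linarith
  rw [hInf] at hwidth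
  linarith

theorem stmt_17 (n : ℕ) (hn : 0 < n) (K : Set (EuclideanSpace ℝ (Fin n)))
    (hKc : IsCompact K) (hKconv : Convex ℝ K) (hKint : (interior K).Nonempty)
    (hw : HasConstantWidth K 1) :
    1 - Real.sqrt (n / (2 * n + 2)) ≤ inradius K ∧
      circumradius K ≤ Real.sqrt (n / (2 * n + 2)) ∧
      circumradius K / inradius K ≤ (Real.sqrt (2 * n ^ 2 + 2 * n) + n) / (n + 2) := by
  have hKne : K.Nonempty := hKint.mono interior_subset
  set s : ℝ := Real.sqrt (n / (2 * n + 2)) with hs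
  have hs0 : 0 ≤ s := Real.sqrt_nonneg _
  have hslt1 : s < 1 := by
    rw [hs, show (1:ℝ) = Real.sqrt 1 from (Real.sqrt_one).symm]
    apply Real.sqrt_lt_sqrt (by positivity)
    rw [div_lt_one (by positivity)]
    have : (0:ℝ) ≤ (n:ℝ) := Nat.cast_nonneg n
    linarith
  have hdiam : ∀ x ∈ K, ∀ y ∈ K, dist x y ≤ 1 := fun x hx y hy => width_diam hKc hw hx hy
  obtain ⟨c, hball⟩ := jung n hKc hdiam
  have hinK : Metric.closedBall c (1 - s) ⊆ K :=
    inball n hKc hKconv hKne hw hs0 hslt1.le hball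
  have hub : ∀ r ∈ {r : ℝ | 0 ≤ r ∧ ∃ c, Metric.closedBall c r ⊆ K}, r ≤ 1 := by
    rintro r ⟨hr0, c', hc'⟩
    have h1 : c' ∈ K := hc' (Metric.mem_closedBall_self hr0)
    set e : EuclideanSpace ℝ (Fin n) := EuclideanSpace.single ⟨0, hn⟩ (1:ℝ) with he'
    have he : ‖e‖ = 1 := by rw [he', EuclideanSpace.norm_single]; norm_num
    have h2 : c' + r • e ∈ K := by
      apply hc'
      rw [Metric.mem_closedBall, dist_eq_norm, add_sub_cancel_left, norm_smul, he,
        Real.norm_eq_abs, abs_of_nonneg hr0, mul_one]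
    have h3 := hdiam _ h2 _ h1
    rw [dist_eq_norm, add_sub_cancel_left, norm_smul, he, Real.norm_eq_abs,
      abs_of_nonneg hr0, mul_one] at h3
    exact h3
  have hbddA : BddAbove {r : ℝ | 0 ≤ r ∧ ∃ c, Metric.closedBall c r ⊆ K} := ⟨1, hub⟩
  have hmemI : (1 - s) ∈ {r : ℝ | 0 ≤ r ∧ ∃ c, Metric.closedBall c r ⊆ K} :=
    ⟨by linarith, c, hinK⟩
  have hIR : 1 - s ≤ inradius K := le_csSup hbddA hmemI
  have hmemO : s ∈ {R : ℝ | 0 ≤ R ∧ ∃ c, K ⊆ Metric.closedBall c R} := ⟨hs0, c, hball⟩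
  have hbddB : BddBelow {R : ℝ | 0 ≤ R ∧ ∃ c, K ⊆ Metric.closedBall c R} :=
    ⟨0, fun r hr => hr.1⟩
  have hCR : circumradius K ≤ s := csInf_le hbddB hmemO
  have hCR0 : 0 ≤ circumradius K := le_csInf ⟨s, hmemO⟩ fun b hb => hb.1
  refine ⟨hIR, hCR, ?_⟩
  have hpos : 0 < 1 - s := by linarith
  have key : circumradius K / inradius K ≤ s / (1 - s) := div_le_div₀ hs0 hCR hpos hIR
  have ha2 : s ^ 2 = (n:ℝ) / (2 * n + 2) := Real.sq_sqrt (by positivity)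
  have h2 : (2 * (n:ℝ) + 2) * s ^ 2 = n := by rw [ha2]; field_simp
  have hsqrt2 : Real.sqrt (2 * (n:ℝ) ^ 2 + 2 * n) = (2 * (n:ℝ) + 2) * s := by
    rw [show (2 * (n:ℝ) ^ 2 + 2 * n) = ((2 * (n:ℝ) + 2) * s) ^ 2 by
      rw [mul_pow]; nlinarith [h2], Real.sqrt_sq (by positivity)]
  have heq : s / (1 - s) = (Real.sqrt (2 * (n:ℝ) ^ 2 + 2 * n) + n) / (n + 2) := by
    rw [hsqrt2, div_eq_div_iff (by linarith) (by positivity)]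
    linear_combination h2
  calc circumradius K / inradius K ≤ s / (1 - s) := key
    _ = (Real.sqrt (2 * (n:ℝ) ^ 2 + 2 * n) + n) / (n + 2) := heq
end

section
/- Every bounded set X ⊆ ℝⁿ is contained in a convex body X̂ of constant width equal to the diameter of X, with d(X) = d(X̂); consequently, if every convex body of constant width 1 in ℝⁿ can be partitioned into n+1 parts of diameter strictly less than 1, then every bounded set in ℝⁿ of positive diameter can be partitioned into n+1 subsets of strictly smaller diameter. -/
set_option maxHeartbeats 1000000

open Metric Bornology RealInnerProductSpace

variable {E : Type*} [NormedAddCommGroup E] [InnerProductSpace ℝ E]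


private lemma sq_lt_sq_of_lt' {a b : ℝ} (ha : 0 ≤ a) (h : a < b) : a ^ 2 < b ^ 2 := by nlinarith

private lemma sq_le_sq_of_le' {a b : ℝ} (ha : 0 ≤ a) (h : a ≤ b) : a ^ 2 ≤ b ^ 2 := by nlinarith

private lemma le_of_sq_le_sq' {a b : ℝ} (h : a ^ 2 ≤ b ^ 2) (ha : 0 ≤ a) (hb : 0 ≤ b) :
    a ≤ b := by nlinarith

private lemma sq_bound' {A B D t ρ ne : ℝ} (hA : A ≤ D) (h0 : 0 ≤ A) (hip : B < -(ρ/2))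
    (ht : 0 < t) (hte : t * ne ≤ ρ/2) (hne : 0 ≤ ne) :
    A ^ 2 + 2 * (t * B) + t ^ 2 * ne ≤ D ^ 2 := by nlinarith

/-- The set of points within distance `d` of every point of `A`. -/
def ballInt (d : ℝ) (A : Set E) : Set E := {z | ∀ a ∈ A, dist z a ≤ d}

lemma ballInt_anti {d : ℝ} {A B : Set E} (h : A ⊆ B) : ballInt d B ⊆ ballInt d A :=
  fun _ hz a ha => hz a (h ha)

lemma subset_ballInt_ballInt {d : ℝ} {A : Set E} : A ⊆ ballInt d (ballInt d A) :=
  fun a ha z hz => by rw [dist_comm]; exact hz a ha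

lemma isClosed_ballInt {d : ℝ} (A : Set E) : IsClosed (ballInt d A) := by
  have : ballInt d A = ⋂ a ∈ A, {z : E | dist z a ≤ d} := by
    ext z; simp [ballInt]
  rw [this]
  exact isClosed_biInter fun a _ => isClosed_le (continuous_id.dist continuous_const)
    continuous_const

lemma convex_ballInt {d : ℝ} (A : Set E) : Convex ℝ (ballInt d A) := by
  have : ballInt d A = ⋂ a ∈ A, Metric.closedBall a d := by
    ext z; simp [ballInt, Metric.mem_closedBall]
  rw [this]
  exact convex_iInter₂ fun a _ => convex_closedBall a d

/-- Key lemma: if `p` maximizes `⟪u,·⟫` on `Q = ballInt d C` with `C` compact,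
then all of `Q` lies in the ball of radius `d` around `p - d • u`. -/
lemma core {d : ℝ} (hd : 0 < d) {C : Set E} (hC : IsCompact C) {u p : E} (hu : ‖u‖ = 1)
    (hp : p ∈ ballInt d C) (hmax : ∀ y ∈ ballInt d C, ⟪u, y⟫ ≤ ⟪u, p⟫)
    {x : E} (hx : x ∈ ballInt d C) : dist x (p - d • u) ≤ d := by
  by_contra hcon
  push_neg at hcon
  rcases C.eq_empty_or_nonempty with rfl | hCne
  · have hq : p + u ∈ ballInt d (∅ : Set E) := by intro a ha; exact absurd ha (Set.notMem_empty a)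
    have := hmax _ hq
    have huu : ⟪u, p + u⟫ = ⟪u, p⟫ + 1 := by
      rw [inner_add_right, real_inner_self_eq_norm_sq, hu]; ring
    linarith [huu ▸ this]
  -- basic inequality from the contradiction hypothesis
  have hxp : ‖x - p + d • u‖ > d := by
    rw [dist_eq_norm] at hcon
    have : x - (p - d • u) = x - p + d • u := by abel
    rwa [this] at hcon
  have hdu : ‖d • u‖ = d := by rw [norm_smul, hu, Real.norm_eq_abs, abs_of_pos hd, mul_one]
  have hsq : d ^ 2 < ‖x - p + d • u‖ ^ 2 := sq_lt_sq_of_lt' hd.le hxp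
  have hexp : ‖x - p + d • u‖ ^ 2 = ‖x - p‖ ^ 2 + 2 * ⟪x - p, d • u⟫ + d ^ 2 := by
    rw [norm_add_sq_real, hdu]
  have hiflip : ⟪x - p, d • u⟫ = - (d * ⟪u, p - x⟫) := by
    rw [real_inner_smul_right, real_inner_comm u (x - p)]
    have hh : ⟪u, x - p⟫ = - ⟪u, p - x⟫ := by
      rw [← inner_neg_right]; congr 1; abel
    rw [hh]; ring
  have hnrev : ‖x - p‖ = ‖p - x‖ := norm_sub_rev _ _
  have hA : 2 * d * ⟪u, p - x⟫ < ‖p - x‖ ^ 2 := by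
    rw [hexp, hiflip, hnrev] at hsq; linarith
  have hs : 0 < ‖p - x‖ ^ 2 := by
    rcases eq_or_ne p x with rfl | hne
    · simp at hA
    · exact pow_pos (norm_pos_iff.mpr (sub_ne_zero.mpr hne)) 2
  set s : ℝ := ‖p - x‖ ^ 2 with hs_def
  -- step 1 : active constraints
  have step1 : ∀ c ∈ C, dist p c = d → s ≤ 2 * ⟪p - x, p - c⟫ := by
    intro c hc hdc
    have h1 : dist x c ≤ d := hx c hc
    have h2 : ‖x - p + (p - c)‖ ≤ d := by
      rw [dist_eq_norm] at h1; have : x - c = x - p + (p - c) := by abel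
      rwa [this] at h1
    have h3 : ‖x - p + (p - c)‖ ^ 2 ≤ d ^ 2 := sq_le_sq_of_le' (norm_nonneg _) h2
    have h4 : ‖x - p + (p - c)‖ ^ 2
        = ‖x - p‖ ^ 2 + 2 * ⟪x - p, p - c⟫ + ‖p - c‖ ^ 2 := norm_add_sq_real _ _
    have h5 : ‖p - c‖ = d := by rw [← dist_eq_norm]; exact hdc
    have h6 : ⟪x - p, p - c⟫ = - ⟪p - x, p - c⟫ := by
      rw [← inner_neg_left]; congr 1; abel
    rw [h4, h5, h6, hnrev] at h3
    linarith
  -- the set of active constraints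
  set C₀ : Set E := C ∩ {c | dist p c = d} with hC₀_def
  have hC₀cpt : IsCompact C₀ :=
    hC.inter_right (isClosed_eq (continuous_const.dist continuous_id) continuous_const)
  rcases C₀.eq_empty_or_nonempty with hC₀e | hC₀ne
  · -- no active constraint: push p along u
    obtain ⟨cm, hcm, hcmax⟩ := hC.exists_isMaxOn hCne
      ((continuous_const.dist continuous_id).continuousOn (s := C))
    set D : ℝ := dist p cm with hD_def
    have hDlt : D < d := by
      have hle : D ≤ d := hp cm hcm
      rcases lt_or_eq_of_le hle with h | h
      · exact h
      · exfalso
        have hmem : cm ∈ C₀ := by rw [hC₀_def]; exact ⟨hcm, h⟩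
        rw [hC₀e] at hmem
        exact Set.notMem_empty cm hmem
    have hq : p + (d - D) • u ∈ ballInt d C := by
      intro c hc
      have h1 : dist (p + (d - D) • u) c ≤ dist (p + (d - D) • u) p + dist p c :=
        dist_triangle _ _ _
      have h2 : dist (p + (d - D) • u) p = d - D := by
        rw [dist_eq_norm]
        have : p + (d - D) • u - p = (d - D) • u := by abel
        rw [this, norm_smul, hu, Real.norm_eq_abs, abs_of_nonneg (by linarith), mul_one]
      have h3 : dist p c ≤ D := hcmax hc
      linarith
    have := hmax _ hq
    have h4 : ⟪u, p + (d - D) • u⟫ = ⟪u, p⟫ + (d - D) := by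
      rw [inner_add_right, real_inner_smul_right, real_inner_self_eq_norm_sq, hu]; ring
    linarith [h4 ▸ this]
  · -- active constraints exist
    obtain ⟨c₀, hc₀, hgmax⟩ := hC₀cpt.exists_isMaxOn hC₀ne
      ((continuous_const.inner (continuous_const.sub continuous_id)).continuousOn
        (s := C₀) (f := fun c => ⟪u, p - c⟫))
    set g : ℝ := ⟪u, p - c₀⟫ with hg_def
    have hpn : ‖p - c₀‖ = d := by rw [← dist_eq_norm]; exact hc₀.2
    have hgle : g ≤ d := by
      calc g ≤ ‖u‖ * ‖p - c₀‖ := real_inner_le_norm u _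
      _ = d := by rw [hu, hpn, one_mul]
    rcases eq_or_lt_of_le hgle with hgeq | hglt
    · -- equality case: c₀ = p - d • u, direct contradiction
      have : ‖(p - c₀) - d • u‖ ^ 2 = 0 := by
        rw [norm_sub_sq_real, hpn, hdu, real_inner_smul_right]
        rw [real_inner_comm]
        rw [← hg_def] at *
        rw [← hgeq]; ring
      have h0 : p - c₀ = d • u := by
        have := pow_eq_zero_iff (n := 2) (by norm_num) |>.mp this
        rwa [norm_eq_zero, sub_eq_zero] at this
      have := step1 c₀ hc₀.1 hc₀.2
      rw [h0, real_inner_smul_right, real_inner_comm] at this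
      linarith
    · -- main case
      set G : ℝ := max g 0 with hG_def
      have hG0 : 0 ≤ G := le_max_right _ _
      have hGd : G < d := max_lt hglt hd
      set μ : ℝ := (G + d) / s with hμ_def
      have hμ : 0 < μ := div_pos (by linarith) hs
      have hμs : μ * s = G + d := div_mul_cancel₀ _ (ne_of_gt hs)
      set e : E := u + μ • (x - p) with he_def
      set ρ : ℝ := (d - G) / 2 with hρ_def
      have hρ : 0 < ρ := by rw [hρ_def]; linarith
      -- active constraints decrease strictly along e
      have hactive : ∀ c ∈ C₀, ⟪e, p - c⟫ ≤ -ρ := by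
        intro c hc
        have h1 : ⟪e, p - c⟫ = ⟪u, p - c⟫ + μ * ⟪x - p, p - c⟫ := by
          rw [he_def, inner_add_left, real_inner_smul_left]
        have h2 : ⟪u, p - c⟫ ≤ g := hgmax hc
        have h3 : s ≤ 2 * ⟪p - x, p - c⟫ := step1 c hc.1 hc.2
        have h4 : ⟪x - p, p - c⟫ = - ⟪p - x, p - c⟫ := by
          rw [← inner_neg_left]; congr 1; abel
        have h5 : μ * ⟪x - p, p - c⟫ ≤ - (μ * s) / 2 := by
          rw [h4]
          have : μ * (s / 2) ≤ μ * ⟪p - x, p - c⟫ :=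
            mul_le_mul_of_nonneg_left (by linarith) hμ.le
          linarith
        have h6 : g ≤ G := le_max_left _ _
        rw [h1]; rw [hμs] at h5
        rw [hρ_def]; linarith
      -- the objective increases along e
      have hτ : 0 < ⟪u, e⟫ := by
        have h1 : ⟪u, e⟫ = 1 + μ * ⟪u, x - p⟫ := by
          rw [he_def, inner_add_right, real_inner_smul_right, real_inner_self_eq_norm_sq, hu]
          ring
        have h2 : ⟪u, x - p⟫ = - ⟪u, p - x⟫ := by
          rw [← inner_neg_right]; congr 1; abel
        have h3 : μ * (2 * d * ⟪u, p - x⟫) < μ * s := mul_lt_mul_of_pos_left hA hμ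
        rw [hμs] at h3
        have hz : μ * ⟪u, p - x⟫ < 1 := by
          have h4 : 2 * d * (μ * ⟪u, p - x⟫) < 2 * d * 1 := by
            calc 2 * d * (μ * ⟪u, p - x⟫) = μ * (2 * d * ⟪u, p - x⟫) := by ring
            _ < G + d := h3
            _ ≤ 2 * d * 1 := by linarith
          exact lt_of_mul_lt_mul_left h4 (by linarith)
        rw [h1, h2]
        linarith
      -- uniform strict decrease near active set
      have hnear : ∃ δ > 0, ∀ c ∈ C, d - δ < dist p c → ⟪e, p - c⟫ < -(ρ/2) := by
        set F : Set E := C ∩ {c | -(ρ/2) ≤ ⟪e, p - c⟫} with hF_def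
        have hFcpt : IsCompact F := hC.inter_right
          (isClosed_le continuous_const (continuous_const.inner
            (continuous_const.sub continuous_id)))
        rcases F.eq_empty_or_nonempty with hFe | hFne
        · refine ⟨d, hd, fun c hc _ => ?_⟩
          by_contra hcc
          push_neg at hcc
          have hmem : c ∈ F := by rw [hF_def]; exact ⟨hc, hcc⟩
          rw [hFe] at hmem
          exact Set.notMem_empty c hmem
        · obtain ⟨cf, hcf, hfmax⟩ := hFcpt.exists_isMaxOn hFne
            ((continuous_const.dist continuous_id).continuousOn (s := F))
          have hDF : dist p cf < d := by
            have hle : dist p cf ≤ d := hp cf hcf.1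
            rcases lt_or_eq_of_le hle with h | h
            · exact h
            · exfalso
              have : cf ∈ C₀ := ⟨hcf.1, h⟩
              have := hactive cf this
              have := hcf.2
              simp only [Set.mem_setOf_eq] at this
              linarith
          refine ⟨d - dist p cf, by linarith, fun c hc hdc => ?_⟩
          by_contra hcc
          push_neg at hcc
          have hcF : c ∈ F := by rw [hF_def]; exact ⟨hc, hcc⟩
          have h9 : dist p c ≤ dist p cf := hfmax hcF
          linarith
      obtain ⟨δ, hδ, hnear⟩ := hnear
      set N : ℝ := ‖e‖ + 1 with hN_def
      have hN : 0 < N := by positivity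
      have heN : ‖e‖ ≤ N := by rw [hN_def]; linarith
      set t : ℝ := min (δ / N) (ρ / (2 * N ^ 2)) with ht_def
      have ht : 0 < t := lt_min (div_pos hδ hN) (div_pos hρ (by positivity))
      have ht1 : t * ‖e‖ ≤ δ := by
        calc t * ‖e‖ ≤ (δ / N) * N :=
          mul_le_mul (min_le_left _ _) heN (norm_nonneg e) (le_of_lt (div_pos hδ hN))
        _ = δ := div_mul_cancel₀ _ (ne_of_gt hN)
      have ht2 : t * ‖e‖ ^ 2 ≤ ρ / 2 := by
        have h1 : t ≤ ρ / (2 * N ^ 2) := min_le_right _ _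
        have h2 : ‖e‖ ^ 2 ≤ N ^ 2 := sq_le_sq_of_le' (norm_nonneg e) heN
        calc t * ‖e‖ ^ 2 ≤ (ρ / (2 * N ^ 2)) * N ^ 2 := by
              apply mul_le_mul h1 h2 (by positivity) (by positivity)
        _ = ρ / 2 := by field_simp
      have hq : p + t • e ∈ ballInt d C := by
        intro c hc
        by_cases hcase : d - δ < dist p c
        · have hip : ⟪e, p - c⟫ < -(ρ/2) := hnear c hc hcase
          have h1 : dist (p + t • e) c = ‖(p - c) + t • e‖ := by
            rw [dist_eq_norm]; congr 1; abel
          have h2 : ‖(p - c) + t • e‖ ^ 2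
              = ‖p - c‖ ^ 2 + 2 * (t * ⟪e, p - c⟫) + t ^ 2 * ‖e‖ ^ 2 := by
            rw [norm_add_sq_real, real_inner_smul_right, real_inner_comm, norm_smul,
              Real.norm_eq_abs, abs_of_pos ht, mul_pow]
          have h3 : ‖p - c‖ ≤ d := by rw [← dist_eq_norm]; exact hp c hc
          have h4 : ‖(p - c) + t • e‖ ^ 2 ≤ d ^ 2 := by
            rw [h2]
            exact sq_bound' h3 (norm_nonneg _) hip ht ht2 (sq_nonneg _)
          rw [h1]
          exact le_of_sq_le_sq' h4 (norm_nonneg _) hd.le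
        · push_neg at hcase
          have h1 : dist (p + t • e) c ≤ dist (p + t • e) p + dist p c := dist_triangle _ _ _
          have h2 : dist (p + t • e) p = t * ‖e‖ := by
            rw [dist_eq_norm]
            have : p + t • e - p = t • e := by abel
            rw [this, norm_smul, Real.norm_eq_abs, abs_of_pos ht]
          linarith
      have := hmax _ hq
      have h7 : ⟪u, p + t • e⟫ = ⟪u, p⟫ + t * ⟪u, e⟫ := by
        rw [inner_add_right, real_inner_smul_right]
      linarith [h7 ▸ this, mul_pos ht hτ]



open Pointwise in
lemma completion (n : ℕ) (X : Set (EuclideanSpace ℝ (Fin n))) (hXb : IsBounded X)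
    (hXne : X.Nonempty) (hXd : 0 < Metric.diam X) :
    ∃ W : Set (EuclideanSpace ℝ (Fin n)), X ⊆ W ∧ IsCompact W ∧ Convex ℝ W ∧
      (interior W).Nonempty ∧ HasConstantWidth W (Metric.diam X) ∧
      Metric.diam W = Metric.diam X := by
  set d := Metric.diam X with hd_def
  have hd : 0 < d := hXd
  set K₁ := ballInt d X with hK₁_def
  set K₂ := ballInt d K₁ with hK₂_def
  obtain ⟨x₀, hx₀⟩ := hXne
  have hXK₁ : X ⊆ K₁ := fun x hx y hy => Metric.dist_le_diam_of_mem hXb hx hy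
  have hXK₂ : X ⊆ K₂ := fun x hx => subset_ballInt_ballInt hx
  have hx₀K₁ : x₀ ∈ K₁ := hXK₁ hx₀
  have hK₁c : IsCompact K₁ := isCompact_of_isClosed_isBounded (isClosed_ballInt X)
    (Metric.isBounded_closedBall.subset fun z hz => Metric.mem_closedBall.mpr (hz x₀ hx₀))
  have hK₁ne : K₁.Nonempty := ⟨x₀, hx₀K₁⟩
  have hK₂c : IsCompact K₂ := isCompact_of_isClosed_isBounded (isClosed_ballInt K₁)
    (Metric.isBounded_closedBall.subset fun z hz => Metric.mem_closedBall.mpr (hz x₀ hx₀K₁))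
  have hK₂ne : K₂.Nonempty := ⟨x₀, hXK₂ hx₀⟩
  have hK₁b : K₁ = ballInt d K₂ := by
    apply Set.Subset.antisymm
    · exact fun z hz => subset_ballInt_ballInt hz
    · exact ballInt_anti hXK₂
  set W := (2⁻¹ : ℝ) • K₁ + (2⁻¹ : ℝ) • K₂ with hW_def
  have hmemW : ∀ a ∈ K₁, ∀ b ∈ K₂, (2⁻¹:ℝ) • a + (2⁻¹:ℝ) • b ∈ W := fun a ha b hb =>
    Set.add_mem_add (Set.smul_mem_smul_set ha) (Set.smul_mem_smul_set hb)
  have hXW : X ⊆ W := by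
    intro x hx
    have h1 := hmemW x (hXK₁ hx) x (hXK₂ hx)
    have h2 : (2⁻¹:ℝ) • x + (2⁻¹:ℝ) • x = x := by
      rw [← add_smul]; norm_num
    rwa [h2] at h1
  have hWc : IsCompact W := (hK₁c.smul _).add (hK₂c.smul _)
  have hWconv : Convex ℝ W := ((convex_ballInt X).smul _).add ((convex_ballInt K₁).smul _)
  have hWne : W.Nonempty := ⟨x₀, hXW hx₀⟩
  have hcont : ∀ u : EuclideanSpace ℝ (Fin n),
      Continuous (fun x : EuclideanSpace ℝ (Fin n) => ⟪u, x⟫) := fun u =>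
    continuous_const.inner continuous_id
  have hwidth : ∀ u : EuclideanSpace ℝ (Fin n), ‖u‖ = 1 →
      sSup ((fun x => ⟪u, x⟫) '' W) - sInf ((fun x => ⟪u, x⟫) '' W) = d := by
    intro u hu
    obtain ⟨p₁, hp₁, hp₁max⟩ := hK₁c.exists_isMaxOn hK₁ne ((hcont u).continuousOn)
    obtain ⟨q₁, hq₁, hq₁min⟩ := hK₁c.exists_isMinOn hK₁ne ((hcont u).continuousOn)
    obtain ⟨p₂, hp₂, hp₂max⟩ := hK₂c.exists_isMaxOn hK₂ne ((hcont u).continuousOn)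
    obtain ⟨q₂, hq₂, hq₂min⟩ := hK₂c.exists_isMinOn hK₂ne ((hcont u).continuousOn)
    -- p₁ - d • u ∈ K₂
    have hcore₁ : ∀ x ∈ K₁, dist x (p₁ - d • u) ≤ d := by
      intro x hxm
      rw [hK₁b] at hp₁ hxm
      refine core hd hK₂c hu hp₁ ?_ hxm
      intro y hy
      rw [← hK₁b] at hy
      exact hp₁max hy
    have hmem₁ : p₁ - d • u ∈ K₂ := by
      intro a ha; rw [dist_comm]; exact hcore₁ a ha
    -- p₂ - d • u ∈ K₁
    have hcore₂ : ∀ x ∈ K₂, dist x (p₂ - d • u) ≤ d := by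
      intro x hxm
      exact core hd hK₁c hu hp₂ (fun y hy => hp₂max hy) hxm
    have hmem₂ : p₂ - d • u ∈ K₁ := by
      rw [hK₁b]; intro a ha; rw [dist_comm]; exact hcore₂ a ha
    have l₁ : ⟪u, p₁⟫ - ⟪u, q₂⟫ = d := by
      apply le_antisymm
      · have h1 : ⟪u, p₁⟫ - ⟪u, q₂⟫ = ⟪u, p₁ - q₂⟫ := (inner_sub_right u p₁ q₂).symm
        have h2 : ⟪u, p₁ - q₂⟫ ≤ ‖u‖ * ‖p₁ - q₂‖ := real_inner_le_norm _ _
        have h3 : dist q₂ p₁ ≤ d := hq₂ p₁ hp₁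
        rw [dist_eq_norm] at h3
        have h4 : ‖p₁ - q₂‖ = ‖q₂ - p₁‖ := norm_sub_rev _ _
        rw [h1]; rw [hu, one_mul] at h2; rw [h4] at h2; linarith
      · have h1 : ⟪u, q₂⟫ ≤ ⟪u, p₁ - d • u⟫ := hq₂min hmem₁
        have h2 : ⟪u, p₁ - d • u⟫ = ⟪u, p₁⟫ - d := by
          rw [inner_sub_right, real_inner_smul_right, real_inner_self_eq_norm_sq, hu]; ring
        linarith [h2 ▸ h1]
    have l₂ : ⟪u, p₂⟫ - ⟪u, q₁⟫ = d := by
      apply le_antisymm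
      · have h1 : ⟪u, p₂⟫ - ⟪u, q₁⟫ = ⟪u, p₂ - q₁⟫ := (inner_sub_right u p₂ q₁).symm
        have h2 : ⟪u, p₂ - q₁⟫ ≤ ‖u‖ * ‖p₂ - q₁‖ := real_inner_le_norm _ _
        have h3 : dist p₂ q₁ ≤ d := hp₂ q₁ hq₁
        rw [dist_eq_norm] at h3
        rw [h1]; rw [hu, one_mul] at h2; linarith
      · have h1 : ⟪u, q₁⟫ ≤ ⟪u, p₂ - d • u⟫ := hq₁min hmem₂
        have h2 : ⟪u, p₂ - d • u⟫ = ⟪u, p₂⟫ - d := by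
          rw [inner_sub_right, real_inner_smul_right, real_inner_self_eq_norm_sq, hu]; ring
        linarith [h2 ▸ h1]
    have hSup : IsGreatest ((fun x => ⟪u, x⟫) '' W) (2⁻¹ * ⟪u, p₁⟫ + 2⁻¹ * ⟪u, p₂⟫) := by
      constructor
      · refine ⟨(2⁻¹:ℝ) • p₁ + (2⁻¹:ℝ) • p₂, hmemW p₁ hp₁ p₂ hp₂, ?_⟩
        simp only [inner_add_right, real_inner_smul_right]
      · rintro r ⟨z, hz, rfl⟩
        rcases Set.mem_add.mp hz with ⟨a', ha', b', hb', rfl⟩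
        rcases Set.mem_smul_set.mp ha' with ⟨a, ha, rfl⟩
        rcases Set.mem_smul_set.mp hb' with ⟨b, hb, rfl⟩
        have h1 : ⟪u, a⟫ ≤ ⟪u, p₁⟫ := hp₁max ha
        have h2 : ⟪u, b⟫ ≤ ⟪u, p₂⟫ := hp₂max hb
        simp only [inner_add_right, real_inner_smul_right]
        linarith
    have hInf : IsLeast ((fun x => ⟪u, x⟫) '' W) (2⁻¹ * ⟪u, q₁⟫ + 2⁻¹ * ⟪u, q₂⟫) := by
      constructor
      · refine ⟨(2⁻¹:ℝ) • q₁ + (2⁻¹:ℝ) • q₂, hmemW q₁ hq₁ q₂ hq₂, ?_⟩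
        simp only [inner_add_right, real_inner_smul_right]
      · rintro r ⟨z, hz, rfl⟩
        rcases Set.mem_add.mp hz with ⟨a', ha', b', hb', rfl⟩
        rcases Set.mem_smul_set.mp ha' with ⟨a, ha, rfl⟩
        rcases Set.mem_smul_set.mp hb' with ⟨b, hb, rfl⟩
        have h1 : ⟪u, q₁⟫ ≤ ⟪u, a⟫ := hq₁min ha
        have h2 : ⟪u, q₂⟫ ≤ ⟪u, b⟫ := hq₂min hb
        simp only [inner_add_right, real_inner_smul_right]
        linarith
    rw [hSup.csSup_eq, hInf.csInf_eq]
    linarith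
  have hCW : HasConstantWidth W d := fun u hu => hwidth u hu
  have hdiamle : Metric.diam W ≤ d := by
    apply Metric.diam_le_of_forall_dist_le hd.le
    intro x hxw y hyw
    rcases eq_or_ne x y with rfl | hne
    · rw [dist_self]; exact hd.le
    · have hv : x - y ≠ 0 := sub_ne_zero.mpr hne
      set u := ‖x - y‖⁻¹ • (x - y) with hu_def
      have hu : ‖u‖ = 1 := norm_smul_inv_norm (𝕜 := ℝ) hv
      have key := hwidth u hu
      have h1 : ⟪u, x⟫ ≤ sSup ((fun x => ⟪u, x⟫) '' W) :=
        le_csSup ((hWc.image (hcont u)).bddAbove) ⟨x, hxw, rfl⟩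
      have h2 : sInf ((fun x => ⟪u, x⟫) '' W) ≤ ⟪u, y⟫ :=
        csInf_le ((hWc.image (hcont u)).bddBelow) ⟨y, hyw, rfl⟩
      have h3 : ⟪u, x⟫ - ⟪u, y⟫ = ‖x - y‖ := by
        rw [← inner_sub_right, hu_def, real_inner_smul_left, real_inner_self_eq_norm_sq]
        rw [sq]
        field_simp
      rw [dist_eq_norm]
      linarith
  have hdiam : Metric.diam W = d :=
    le_antisymm hdiamle (Metric.diam_mono hXW hWc.isBounded)
  have hint : (interior W).Nonempty := by
    rw [hWconv.interior_nonempty_iff_affineSpan_eq_top]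
    by_contra htop
    have hvs : vectorSpan ℝ W ≠ ⊤ := fun h =>
      htop ((AffineSubspace.affineSpan_eq_top_iff_vectorSpan_eq_top_of_nonempty ℝ _ _ hWne).mpr h)
    have horth : (vectorSpan ℝ W)ᗮ ≠ ⊥ := fun h => hvs (Submodule.orthogonal_eq_bot_iff.mp h)
    obtain ⟨v, hv, hv0⟩ := Submodule.exists_mem_ne_zero_of_ne_bot horth
    set u := ‖v‖⁻¹ • v with hu_def
    have hu : ‖u‖ = 1 := norm_smul_inv_norm (𝕜 := ℝ) hv0
    have huo : u ∈ (vectorSpan ℝ W)ᗮ := Submodule.smul_mem _ _ hv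
    have key := hwidth u hu
    have hxW : x₀ ∈ W := hXW hx₀
    have himg : (fun x => ⟪u, x⟫) '' W = {⟪u, x₀⟫} := by
      apply Set.Subset.antisymm
      · rintro r ⟨z, hz, rfl⟩
        have hdiff : z - x₀ ∈ vectorSpan ℝ W := by
          have := vsub_mem_vectorSpan ℝ hz hxW
          rwa [vsub_eq_sub] at this
        have h0 : ⟪z - x₀, u⟫ = 0 := (Submodule.mem_orthogonal _ u).mp huo _ hdiff
        rw [real_inner_comm, inner_sub_right] at h0
        simp only [Set.mem_singleton_iff]
        linarith
      · rintro r hr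
        rw [Set.mem_singleton_iff] at hr
        exact ⟨x₀, hxW, hr.symm⟩
    rw [himg, csSup_singleton, csInf_singleton, sub_self] at key
    linarith
  exact ⟨W, hXW, hWc, hWconv, hint, hCW, hdiam⟩

open Pointwise in
theorem stmt_19 (n : ℕ) :
    (∀ X : Set (EuclideanSpace ℝ (Fin n)), Bornology.IsBounded X → X.Nonempty →
      0 < Metric.diam X →
      ∃ W : Set (EuclideanSpace ℝ (Fin n)), X ⊆ W ∧ IsCompact W ∧ Convex ℝ W ∧
        (interior W).Nonempty ∧ HasConstantWidth W (Metric.diam X) ∧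
        Metric.diam W = Metric.diam X) ∧
    ((∀ W : Set (EuclideanSpace ℝ (Fin n)), IsCompact W → Convex ℝ W →
        (interior W).Nonempty → HasConstantWidth W 1 →
        ∃ f : EuclideanSpace ℝ (Fin n) → Fin (n + 1),
          ∀ i, Metric.diam {x ∈ W | f x = i} < 1) →
      ∀ X : Set (EuclideanSpace ℝ (Fin n)), Bornology.IsBounded X →
        0 < Metric.diam X →
        ∃ f : EuclideanSpace ℝ (Fin n) → Fin (n + 1),
          ∀ i, Metric.diam {x ∈ X | f x = i} < Metric.diam X) := by
  constructor
  · exact fun X hb hne hd => completion n X hb hne hd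
  · intro H X hXb hXd
    have hXne : X.Nonempty := by
      rcases X.eq_empty_or_nonempty with rfl | h
      · rw [Metric.diam_empty] at hXd; exact absurd hXd (lt_irrefl 0)
      · exact h
    obtain ⟨W, hXW, hWc, hWconv, hWint, hWcw, hWdiam⟩ := completion n X hXb hXne hXd
    set d := Metric.diam X with hd_def
    have hd : 0 < d := hXd
    set W' := (d⁻¹ : ℝ) • W with hW'_def
    have hW'c : IsCompact W' := hWc.smul _
    have hW'conv : Convex ℝ W' := hWconv.smul _
    have hW'int : (interior W').Nonempty := by
      rw [hW'_def, interior_smul₀ (inv_ne_zero hd.ne')]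
      exact hWint.smul_set
    have hW'cw : HasConstantWidth W' 1 := by
      intro u hu
      have key := hWcw u hu
      have himg : (fun x => (inner ℝ u x : ℝ)) '' W'
          = d⁻¹ • ((fun x => (inner ℝ u x : ℝ)) '' W) := by
        apply Set.Subset.antisymm
        · rintro r ⟨z, hz, rfl⟩
          rcases Set.mem_smul_set.mp hz with ⟨w, hw, rfl⟩
          refine ⟨⟪u, w⟫, ⟨w, hw, rfl⟩, ?_⟩
          show d⁻¹ • (inner ℝ u w : ℝ) = (inner ℝ u (d⁻¹ • w) : ℝ)
          rw [real_inner_smul_right, smul_eq_mul]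
        · rintro r ⟨r', ⟨w, hw, rfl⟩, rfl⟩
          refine ⟨d⁻¹ • w, Set.smul_mem_smul_set hw, ?_⟩
          show (inner ℝ u (d⁻¹ • w) : ℝ) = d⁻¹ • (inner ℝ u w : ℝ)
          rw [real_inner_smul_right, smul_eq_mul]
      rw [himg, Real.sSup_smul_of_nonneg (by positivity), Real.sInf_smul_of_nonneg (by positivity),
        smul_eq_mul, smul_eq_mul, ← mul_sub, key]
      exact inv_mul_cancel₀ hd.ne'
    obtain ⟨f', hf'⟩ := H W' hW'c hW'conv hW'int hW'cw
    refine ⟨fun x => f' (d⁻¹ • x), fun i => ?_⟩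
    set S' := {y ∈ W' | f' y = i} with hS'_def
    have hS'b : IsBounded S' := hW'c.isBounded.subset (Set.sep_subset _ _)
    have hS'd : Metric.diam S' < 1 := hf' i
    have hkey : ∀ x ∈ {x ∈ X | f' (d⁻¹ • x) = i}, ∀ y ∈ {x ∈ X | f' (d⁻¹ • x) = i},
        dist x y ≤ d * Metric.diam S' := by
      intro x hx y hy
      have hx' : d⁻¹ • x ∈ S' := ⟨Set.smul_mem_smul_set (hXW hx.1), hx.2⟩
      have hy' : d⁻¹ • y ∈ S' := ⟨Set.smul_mem_smul_set (hXW hy.1), hy.2⟩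
      have h1 : dist (d⁻¹ • x) (d⁻¹ • y) ≤ Metric.diam S' :=
        Metric.dist_le_diam_of_mem hS'b hx' hy'
      have h2 : dist (d⁻¹ • x) (d⁻¹ • y) = d⁻¹ * dist x y := by
        rw [dist_smul₀, Real.norm_eq_abs, abs_of_pos (inv_pos.mpr hd)]
      calc dist x y = d * (d⁻¹ * dist x y) := by field_simp
      _ ≤ d * Metric.diam S' := by rw [← h2]; exact mul_le_mul_of_nonneg_left h1 hd.le
    have h3 : Metric.diam {x ∈ X | f' (d⁻¹ • x) = i} ≤ d * Metric.diam S' :=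
      Metric.diam_le_of_forall_dist_le (by positivity) hkey
    have h4 : d * Metric.diam S' < d * 1 := by
      apply mul_lt_mul_of_pos_left hS'd hd
    calc Metric.diam {x ∈ X | f' (d⁻¹ • x) = i} ≤ d * Metric.diam S' := h3
    _ < d * 1 := h4
    _ = Metric.diam X := by rw [mul_one]
end
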